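/- arXiv:1608.02203 — 5 statements merged into one kernel-verified Lean document; each statement's English description precedes it below -/
import Mathlib

section
/- Let d_A, d_B, d_E be positive natural numbers and V an isometry from ℂ^{d_A} to ℂ^{d_B} ⊗ ℂ^{d_E}, with associated channel Φ(ρ) = Tr_E(V ρ Vᴴ) and complementary channel Φ̂(ρ) = Tr_B(V ρ Vᴴ). Then for every finite ensemble {π_i, ρ_i}_{i∈Fin m} of states on ℂ^{d_A} with average state ρ̄ = ∑_i π_i ρ_i, the identity χ({π_i, ρ_i}) + I(B:E)_{V ρ̄ Vᴴ} = χ({π_i, Φ(ρ_i)}) + χ({π_i, Φ̂(ρ_i)}) + ∑_i π_i · I(B:E)_{V ρ_i Vᴴ} holds. -/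
open Matrix ComplexOrder

noncomputable section

/-- Von Neumann entropy: sum of `negMulLog` over eigenvalues. -/
def vnEntropy {ι : Type*} [Fintype ι] [DecidableEq ι] (ρ : Matrix ι ι ℂ) : ℝ :=
  if h : ρ.IsHermitian then ∑ i, Real.negMulLog (h.eigenvalues i) else 0

/-- Partial trace over the second (environment) factor. -/
def ptraceE {dB dE : ℕ} (M : Matrix (Fin dB × Fin dE) (Fin dB × Fin dE) ℂ) :
    Matrix (Fin dB) (Fin dB) ℂ :=
  Matrix.of fun b b' => ∑ e, M (b, e) (b', e)

/-- Partial trace over the first factor. -/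
def ptraceB {dB dE : ℕ} (M : Matrix (Fin dB × Fin dE) (Fin dB × Fin dE) ℂ) :
    Matrix (Fin dE) (Fin dE) ℂ :=
  Matrix.of fun e e' => ∑ b, M (b, e) (b, e')

/-- Quantum mutual information I(B:E) of a bipartite state. -/
def qmi {dB dE : ℕ} (ω : Matrix (Fin dB × Fin dE) (Fin dB × Fin dE) ℂ) : ℝ :=
  vnEntropy (ptraceE ω) + vnEntropy (ptraceB ω) - vnEntropy ω

/-- The channel `ρ ↦ Tr_E (V ρ Vᴴ)` associated with a Stinespring isometry `V`. -/
def chanPhi {dA dB dE : ℕ} (V : Matrix (Fin dB × Fin dE) (Fin dA) ℂ)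
    (ρ : Matrix (Fin dA) (Fin dA) ℂ) : Matrix (Fin dB) (Fin dB) ℂ :=
  ptraceE (V * ρ * Vᴴ)

/-- The complementary channel `ρ ↦ Tr_B (V ρ Vᴴ)`. -/
def chanPhiHat {dA dB dE : ℕ} (V : Matrix (Fin dB × Fin dE) (Fin dA) ℂ)
    (ρ : Matrix (Fin dA) (Fin dA) ℂ) : Matrix (Fin dE) (Fin dE) ℂ :=
  ptraceB (V * ρ * Vᴴ)

/-- Holevo χ-quantity of a finite ensemble `{π i, σ i}`. -/
def finChi {d m : ℕ} (π : Fin m → ℝ) (σ : Fin m → Matrix (Fin d) (Fin d) ℂ) : ℝ :=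
  vnEntropy (∑ i, π i • σ i) - ∑ i, π i * vnEntropy (σ i)

end

section AuxSpec
open Polynomial
noncomputable section
variable {n : Type*} [Fintype n] [DecidableEq n]

/-- eigenvalue multiset of a Hermitian matrix, as complex numbers -/
def specM {A : Matrix n n ℂ} (hA : A.IsHermitian) : Multiset ℂ :=
  Finset.univ.val.map (fun i => (hA.eigenvalues i : ℂ))

lemma det_smul_one_sub {A : Matrix n n ℂ} (hA : A.IsHermitian) (x : ℂ) :
    det (x • (1 : Matrix n n ℂ) - A) = ∏ i, (x - (hA.eigenvalues i : ℂ)) := by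
  set U : Matrix n n ℂ := (hA.eigenvectorUnitary : Matrix n n ℂ)
  have hU : U * star U = 1 := (Matrix.mem_unitaryGroup_iff).mp hA.eigenvectorUnitary.2
  have hkey : x • (1 : Matrix n n ℂ) - A
      = U * (x • 1 - diagonal (RCLike.ofReal ∘ hA.eigenvalues)) * star U := by
    conv_lhs => rw [hA.spectral_theorem]
    rw [Matrix.mul_sub, Matrix.sub_mul]
    congr 1
    rw [Matrix.mul_smul, Matrix.mul_one, Matrix.smul_mul, hU]
  rw [hkey, det_mul, det_mul, mul_comm (det U), mul_assoc, ← det_mul, hU, det_one, mul_one]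
  have : x • (1 : Matrix n n ℂ) - diagonal (RCLike.ofReal ∘ hA.eigenvalues)
      = diagonal (fun i => x - (hA.eigenvalues i : ℂ)) := by
    ext i j
    by_cases h : i = j <;>
      simp [Matrix.sub_apply, Matrix.smul_apply, Matrix.one_apply, diagonal_apply, h]
  rw [this, det_diagonal]

lemma eval_spec_poly {A : Matrix n n ℂ} (hA : A.IsHermitian) (x : ℂ) :
    eval x ((specM hA).map (fun a => X - C a)).prod = det (x • (1 : Matrix n n ℂ) - A) := by
  rw [det_smul_one_sub hA, eval_multiset_prod, specM, Multiset.map_map, Multiset.map_map]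
  rw [Finset.prod]
  congr 1
  apply Multiset.map_congr rfl
  intro i _
  simp

end
noncomputable section
variable {ι κ : Type*} [Fintype ι] [DecidableEq ι] [Fintype κ] [DecidableEq κ]

lemma poly_identity (V : Matrix ι κ ℂ) (hV : Vᴴ * V = 1) {σ : Matrix κ κ ℂ}
    (hσ : σ.IsHermitian) :
    X ^ (Fintype.card κ) *
        ((specM (isHermitian_mul_mul_conjTranspose V hσ)).map (fun a => X - C a)).prod
      = X ^ (Fintype.card ι) * ((specM hσ).map (fun a => X - C a)).prod := by
  apply Polynomial.eq_of_infinite_eval_eq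
  apply Set.Infinite.mono (s := {(0:ℂ)}ᶜ) ?_ ((Set.finite_singleton 0).infinite_compl)
  intro x hx
  have hx0 : x ≠ 0 := hx
  simp only [Set.mem_setOf_eq, eval_mul, eval_pow, eval_X, eval_spec_poly]
  have h1 : x • (1 : Matrix ι ι ℂ) - V * σ * Vᴴ = x • (1 - V * (x⁻¹ • σ) * Vᴴ) := by
    rw [smul_sub]
    congr 1
    rw [Matrix.mul_smul, Matrix.smul_mul, smul_smul, mul_inv_cancel₀ hx0, one_smul]
  have h2 : x • (1 : Matrix κ κ ℂ) - σ = x • (1 - x⁻¹ • σ) := by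
    rw [smul_sub, smul_smul, mul_inv_cancel₀ hx0, one_smul]
  have h3 : det ((1 : Matrix ι ι ℂ) - V * (x⁻¹ • σ) * Vᴴ) = det (1 - x⁻¹ • σ) := by
    have h := Matrix.det_one_add_mul_comm V ((-(x⁻¹ • σ)) * Vᴴ)
    have e1 : (1 : Matrix ι ι ℂ) + V * ((-(x⁻¹ • σ)) * Vᴴ) = 1 - V * (x⁻¹ • σ) * Vᴴ := by
      rw [Matrix.neg_mul, Matrix.mul_neg, ← Matrix.mul_assoc, sub_eq_add_neg]
    have e2 : (1 : Matrix κ κ ℂ) + ((-(x⁻¹ • σ)) * Vᴴ) * V = 1 - x⁻¹ • σ := by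
      rw [Matrix.neg_mul, Matrix.neg_mul, Matrix.mul_assoc, hV, Matrix.mul_one,
        sub_eq_add_neg]
    rw [e1, e2] at h
    exact h
  rw [h1, h2, Matrix.det_smul, Matrix.det_smul, h3]
  ring

lemma spec_conj (V : Matrix ι κ ℂ) (hV : Vᴴ * V = 1) {σ : Matrix κ κ ℂ}
    (hσ : σ.IsHermitian) :
    Multiset.replicate (Fintype.card κ) (0 : ℂ)
        + specM (isHermitian_mul_mul_conjTranspose V hσ)
      = Multiset.replicate (Fintype.card ι) (0 : ℂ) + specM hσ := by
  have h := congrArg Polynomial.roots (poly_identity V hV hσ)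
  have hm : ∀ (s : Multiset ℂ), ((s.map fun a => X - C a).prod).Monic :=
    fun s => monic_multiset_prod_of_monic _ _ (fun a _ => monic_X_sub_C a)
  rw [roots_mul (mul_ne_zero (pow_ne_zero _ X_ne_zero) (hm _).ne_zero),
      roots_mul (mul_ne_zero (pow_ne_zero _ X_ne_zero) (hm _).ne_zero),
      roots_pow, roots_pow, roots_X, roots_multiset_prod_X_sub_C,
      roots_multiset_prod_X_sub_C] at h
  simpa [Multiset.nsmul_singleton] using h

lemma vnEntropy_eq_spec {d : Type*} [Fintype d] [DecidableEq d] {A : Matrix d d ℂ} (hA : A.IsHermitian) :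
    vnEntropy A = ((specM hA).map (fun z => Real.negMulLog z.re)).sum := by
  rw [vnEntropy, dif_pos hA, specM, Multiset.map_map]
  simp only [Function.comp, Complex.ofReal_re]
  rfl

lemma vnEntropy_conj (V : Matrix ι κ ℂ) (hV : Vᴴ * V = 1) {σ : Matrix κ κ ℂ}
    (hσ : σ.IsHermitian) : vnEntropy (V * σ * Vᴴ) = vnEntropy σ := by
  rw [vnEntropy_eq_spec (isHermitian_mul_mul_conjTranspose V hσ), vnEntropy_eq_spec hσ]
  have h := congrArg (fun s : Multiset ℂ => ((s.map (fun z => Real.negMulLog z.re)).sum))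
    (spec_conj V hV hσ)
  simpa [Multiset.map_replicate, Multiset.sum_replicate, Real.negMulLog_zero] using h

end

end AuxSpec

/-- The basic identity
`χ(μ) + I(B:E)_{V ρ̄ Vᴴ} = χ(Φ(μ)) + χ(Φ̂(μ)) + ∑ i, π i • I(B:E)_{V ρ_i Vᴴ}`
for finite ensembles. -/
theorem chi_add_qmi_identity
    (dA dB dE : ℕ) (hdA : 0 < dA) (hdB : 0 < dB) (hdE : 0 < dE)
    (V : Matrix (Fin dB × Fin dE) (Fin dA) ℂ) (hV : Vᴴ * V = 1)
    (m : ℕ) (π : Fin m → ℝ) (hπ0 : ∀ i, 0 ≤ π i) (hπ1 : ∑ i, π i = 1)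
    (ρ : Fin m → Matrix (Fin dA) (Fin dA) ℂ)
    (hρ : ∀ i, (ρ i).PosSemidef ∧ (ρ i).trace = 1) :
    finChi π ρ + qmi (V * (∑ i, π i • ρ i) * Vᴴ)
      = finChi π (fun i => chanPhi V (ρ i))
        + finChi π (fun i => chanPhiHat V (ρ i))
        + ∑ i, π i * qmi (V * ρ i * Vᴴ) := by
  classical
  have hherm : ∀ i, (ρ i).IsHermitian := fun i => (hρ i).1.isHermitian
  have hbar : (∑ i, π i • ρ i).IsHermitian := by
    unfold Matrix.IsHermitian
    rw [Matrix.conjTranspose_sum]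
    refine Finset.sum_congr rfl fun i _ => ?_
    rw [Matrix.conjTranspose_smul, star_trivial, (hherm i).eq]
  have hconj : V * (∑ i, π i • ρ i) * Vᴴ = ∑ i, π i • (V * ρ i * Vᴴ) := by
    rw [Matrix.mul_sum, Matrix.sum_mul]
    refine Finset.sum_congr rfl fun i _ => ?_
    rw [Matrix.mul_smul, Matrix.smul_mul]
  have hptE : ∀ {k : ℕ} (M : Fin k → Matrix (Fin dB × Fin dE) (Fin dB × Fin dE) ℂ)
      (c : Fin k → ℝ), ptraceE (∑ i, c i • M i) = ∑ i, c i • ptraceE (M i) := by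
    intro k M c
    ext b b'
    simp [ptraceE, Matrix.sum_apply, Finset.smul_sum]
    rw [Finset.sum_comm]
  have hptB : ∀ {k : ℕ} (M : Fin k → Matrix (Fin dB × Fin dE) (Fin dB × Fin dE) ℂ)
      (c : Fin k → ℝ), ptraceB (∑ i, c i • M i) = ∑ i, c i • ptraceB (M i) := by
    intro k M c
    ext e e'
    simp [ptraceB, Matrix.sum_apply, Finset.smul_sum]
    rw [Finset.sum_comm]
  have hE : ptraceE (V * (∑ i, π i • ρ i) * Vᴴ) = ∑ i, π i • chanPhi V (ρ i) := by
    rw [hconj, hptE]; rfl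
  have hB : ptraceB (V * (∑ i, π i • ρ i) * Vᴴ) = ∑ i, π i • chanPhiHat V (ρ i) := by
    rw [hconj, hptB]; rfl
  have h1 : vnEntropy (V * (∑ i, π i • ρ i) * Vᴴ) = vnEntropy (∑ i, π i • ρ i) :=
    vnEntropy_conj V hV hbar
  have h2 : ∀ i, vnEntropy (V * ρ i * Vᴴ) = vnEntropy (ρ i) :=
    fun i => vnEntropy_conj V hV (hherm i)
  have hq : ∀ i, π i * qmi (V * ρ i * Vᴴ)
      = π i * (vnEntropy (chanPhi V (ρ i)) + vnEntropy (chanPhiHat V (ρ i))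
          - vnEntropy (ρ i)) := by
    intro i
    rw [qmi, h2 i]
    rfl
  rw [Finset.sum_congr rfl fun i _ => hq i]
  simp only [finChi, qmi, hE, hB, h1, mul_add, mul_sub, Finset.sum_add_distrib,
    Finset.sum_sub_distrib]
  ring
end

section
/- Let d_A, d_B, d_E be positive natural numbers and V an isometry from ℂ^{d_A} to ℂ^{d_B} ⊗ ℂ^{d_E}, with associated channel Φ(ρ) = Tr_E(V ρ Vᴴ) and complementary channel Φ̂(ρ) = Tr_B(V ρ Vᴴ). Then for every Borel probability measure μ on the set S_{d_A} of states on ℂ^{d_A}, with barycenter ρ̄(μ) = ∫ ρ μ(dρ), the identity χ(μ) + I(B:E)_{V ρ̄(μ) Vᴴ} = χ(Φ(μ)) + χ(Φ̂(μ)) + ∫ I(B:E)_{V ρ Vᴴ} μ(dρ) holds, where χ(μ) = H(ρ̄(μ)) − ∫ H(ρ) μ(dρ), χ(Φ(μ)) = H(Φ(ρ̄(μ))) − ∫ H(Φ(ρ)) μ(dρ), and χ(Φ̂(μ)) = H(Φ̂(ρ̄(μ))) − ∫ H(Φ̂(ρ)) μ(dρ). -/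
open MeasureTheory ComplexOrder Matrix

noncomputable section

instance matMS {m n : Type*} : MeasurableSpace (Matrix m n ℂ) :=
  inferInstanceAs (MeasurableSpace (m → n → ℂ))

instance matBS {m n : Type*} [Countable m] [Countable n] : BorelSpace (Matrix m n ℂ) :=
  inferInstanceAs (BorelSpace (m → n → ℂ))

/-- The set of quantum states (density matrices). -/
def stateSet (n : ℕ) : Set (Matrix (Fin n) (Fin n) ℂ) :=
  {ρ | ρ.PosSemidef ∧ ρ.trace = 1}

/-- Barycenter (average state) of a generalized ensemble. -/
def barycenter {n : ℕ} (μ : ProbabilityMeasure (stateSet n)) :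
    Matrix (Fin n) (Fin n) ℂ :=
  Matrix.of fun i j => ∫ ρ : stateSet n, ρ.1 i j ∂(μ : Measure (stateSet n))

/-- Output χ-quantity of a generalized ensemble under a map `Φ`. -/
def gChiOut {n d : ℕ} (Φ : Matrix (Fin n) (Fin n) ℂ → Matrix (Fin d) (Fin d) ℂ)
    (μ : ProbabilityMeasure (stateSet n)) : ℝ :=
  vnEntropy (Φ (barycenter μ)) -
    ∫ ρ : stateSet n, vnEntropy (Φ ρ.1) ∂(μ : Measure (stateSet n))

/-- χ-quantity of a generalized ensemble. -/
def gChi {n : ℕ} (μ : ProbabilityMeasure (stateSet n)) : ℝ :=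
  vnEntropy (barycenter μ) -
    ∫ ρ : stateSet n, vnEntropy ρ.1 ∂(μ : Measure (stateSet n))

/-- The set of pure states (rank-one projections) viewed inside the state space. -/
def pureStates (n : ℕ) : Set (stateSet n) := {ρ | ρ.1 * ρ.1 = ρ.1}

end

open scoped ENNReal


noncomputable section AuxProofs
namespace QProof
open Polynomial Matrix MeasureTheory Filter Topology
open scoped unitInterval ComplexOrder

/-! ### Charpoly lemmas -/

lemma charpoly_similar {n : Type*} [Fintype n] [DecidableEq n] (P M Q : Matrix n n ℂ)
    (hPQ : P * Q = 1) : (P * M * Q).charpoly = M.charpoly := by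
  have hC : (C : ℂ →+* ℂ[X]).mapMatrix P * (C : ℂ →+* ℂ[X]).mapMatrix Q = 1 := by
    rw [← _root_.map_mul, hPQ, _root_.map_one]
  have key : charmatrix (P * M * Q)
      = (C : ℂ →+* ℂ[X]).mapMatrix P * charmatrix M * (C : ℂ →+* ℂ[X]).mapMatrix Q := by
    unfold charmatrix
    rw [Matrix.mul_sub, Matrix.sub_mul, _root_.map_mul, _root_.map_mul]
    congr 1
    rw [Matrix.mul_assoc, (Matrix.scalar_commute (X : ℂ[X]) (fun r => Commute.all _ _) _).eq,
      ← Matrix.mul_assoc, hC, Matrix.one_mul]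
  have hdet : ((C : ℂ →+* ℂ[X]).mapMatrix P).det * ((C : ℂ →+* ℂ[X]).mapMatrix Q).det = 1 := by
    rw [← det_mul, hC, det_one]
  rw [Matrix.charpoly, key, det_mul, det_mul, mul_right_comm, hdet, one_mul, Matrix.charpoly]

lemma charpoly_zero {n : Type*} [Fintype n] [DecidableEq n] :
    (0 : Matrix n n ℂ).charpoly = X ^ (Fintype.card n) := by
  have : charmatrix (0 : Matrix n n ℂ) = diagonal (fun _ => (X : ℂ[X])) := by
    unfold charmatrix
    rw [_root_.map_zero, sub_zero, Matrix.scalar_apply]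
  rw [Matrix.charpoly, this, det_diagonal, Finset.prod_const, Finset.card_univ]

lemma charpoly_diag {n : Type*} [Fintype n] [DecidableEq n] (d : n → ℂ) :
    (diagonal d).charpoly = ∏ i, (X - C (d i)) := by
  have : charmatrix (diagonal d) = diagonal (fun i => X - C (d i)) := by
    ext i j
    by_cases h : i = j
    · subst h; simp
    · simp [h, charmatrix_apply_ne _ _ _ h, diagonal_apply_ne _ h]
  rw [Matrix.charpoly, this, det_diagonal]

lemma charpoly_mul_comm' {n : Type*} [Fintype n] [DecidableEq n] (A B : Matrix n n ℂ) :
    (A * B).charpoly = (B * A).charpoly := by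
  have h1 : (fromBlocks 1 A 0 1 : Matrix (n ⊕ n) (n ⊕ n) ℂ) * fromBlocks 1 (-A) 0 1 = 1 := by
    rw [fromBlocks_multiply]
    simp [← fromBlocks_one]
  have h2 : (fromBlocks 1 A 0 1 : Matrix (n ⊕ n) (n ⊕ n) ℂ) * fromBlocks 0 0 B (B * A)
      * fromBlocks 1 (-A) 0 1 = fromBlocks (A * B) 0 B 0 := by
    rw [fromBlocks_multiply, fromBlocks_multiply]
    congr 1 <;> simp [Matrix.mul_assoc]
  have h3 := charpoly_similar (fromBlocks 1 A 0 1) (fromBlocks 0 0 B (B * A))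
    (fromBlocks 1 (-A) 0 1) h1
  rw [h2] at h3
  rw [Matrix.charpoly_fromBlocks_zero₁₂, Matrix.charpoly_fromBlocks_zero₁₂] at h3
  rw [charpoly_zero] at h3
  have hX : (X : ℂ[X]) ^ Fintype.card n ≠ 0 := pow_ne_zero _ X_ne_zero
  have h4 := h3.symm
  rw [mul_comm] at h4
  exact (mul_right_cancel₀ hX h4).symm

lemma charpoly_of_isHermitian {n : Type*} [Fintype n] [DecidableEq n] {M : Matrix n n ℂ}
    (h : M.IsHermitian) : M.charpoly = ∏ i, (X - C (h.eigenvalues i : ℂ)) := by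
  conv_lhs => rw [h.spectral_theorem, Unitary.conjStarAlgAut_apply]
  rw [charpoly_similar _ _ _ (Unitary.coe_mul_star_self _), charpoly_diag]
  rfl

/-! ### Entropy invariance under isometric conjugation -/

lemma isHermitian_conj {ι m : Type*} [Fintype ι] [Fintype m]
    (V : Matrix ι m ℂ) {ρ : Matrix m m ℂ} (hρ : ρ.IsHermitian) :
    (V * ρ * Vᴴ).IsHermitian := by
  unfold Matrix.IsHermitian
  rw [conjTranspose_mul, conjTranspose_mul, conjTranspose_conjTranspose, hρ.eq,
    Matrix.mul_assoc]

lemma multiset_sum_negMulLog_eigs {n : Type*} [Fintype n] [DecidableEq n] {M : Matrix n n ℂ}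
    (h : M.IsHermitian) :
    ((Finset.univ.val.map (fun i => ((h.eigenvalues i : ℂ)))).map
      (fun z => Real.negMulLog z.re)).sum = vnEntropy M := by
  rw [Multiset.map_map, vnEntropy, dif_pos h]
  rw [Finset.sum]
  congr 1

lemma prodroots_aux {k : Type*} [Fintype k] [DecidableEq k] (a : k → ℝ) (m : ℕ) :
    ((∏ i, (X - C ((a i : ℂ)))) * X ^ m).roots
      = Finset.univ.val.map (fun i => ((a i : ℂ))) + m • ({0} : Multiset ℂ) := by
  have h1 : (∏ i, (X - C ((a i : ℂ)))) ≠ 0 :=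
    (monic_prod_of_monic _ _ (fun i _ => monic_X_sub_C _)).ne_zero
  have h2 : (X : ℂ[X]) ^ m ≠ 0 := pow_ne_zero _ X_ne_zero
  rw [Polynomial.roots_mul (mul_ne_zero h1 h2), Polynomial.roots_pow, Polynomial.roots_X]
  congr 1
  have : (∏ i, (X - C ((a i : ℂ)))) = ((Finset.univ.val.map fun i => ((a i : ℂ))).map
      (fun r => X - C r)).prod := by
    rw [Multiset.map_map]
    rfl
  rw [this, Polynomial.roots_multiset_prod_X_sub_C]

lemma vnEntropy_conj_isometry {dA : ℕ} {ι : Type*} [Fintype ι] [DecidableEq ι]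
    (V : Matrix ι (Fin dA) ℂ) (hV : Vᴴ * V = 1)
    (ρ : Matrix (Fin dA) (Fin dA) ℂ) (hρ : ρ.IsHermitian) :
    vnEntropy (V * ρ * Vᴴ) = vnEntropy ρ := by
  have hM : (V * ρ * Vᴴ).IsHermitian := isHermitian_conj V hρ
  set A : Matrix (ι ⊕ Fin dA) (ι ⊕ Fin dA) ℂ := fromBlocks 0 (V * ρ) 0 0 with hA
  set B : Matrix (ι ⊕ Fin dA) (ι ⊕ Fin dA) ℂ := fromBlocks 0 0 Vᴴ 0 with hB
  have hAB : A * B = fromBlocks (V * ρ * Vᴴ) 0 0 0 := by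
    rw [hA, hB, fromBlocks_multiply]; simp
  have hBA : B * A = fromBlocks 0 0 0 ρ := by
    rw [hA, hB, fromBlocks_multiply]
    simp [← Matrix.mul_assoc, hV]
  have hcp := charpoly_mul_comm' A B
  rw [hAB, hBA, Matrix.charpoly_fromBlocks_zero₁₂, Matrix.charpoly_fromBlocks_zero₁₂,
    charpoly_zero, charpoly_zero, charpoly_of_isHermitian hM, charpoly_of_isHermitian hρ,
    Fintype.card_fin] at hcp
  have hroots := congrArg Polynomial.roots hcp
  rw [prodroots_aux (hM.eigenvalues) dA] at hroots
  rw [mul_comm ((X : ℂ[X]) ^ Fintype.card ι) _] at hroots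
  rw [prodroots_aux (hρ.eigenvalues) (Fintype.card ι)] at hroots
  have hsum := congrArg (fun s : Multiset ℂ => (s.map (fun z => Real.negMulLog z.re)).sum) hroots
  simp only [Multiset.map_add, Multiset.sum_add, Multiset.nsmul_singleton, Multiset.map_replicate,
    Multiset.sum_replicate, Complex.zero_re, Real.negMulLog_zero, smul_zero, add_zero] at hsum
  rw [multiset_sum_negMulLog_eigs hM, multiset_sum_negMulLog_eigs hρ] at hsum
  exact hsum

/-! ### Spectral facts for states -/

lemma trace_pow_eq {d : Type*} [Fintype d] [DecidableEq d] {M : Matrix d d ℂ}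
    (h : M.IsHermitian) (k : ℕ) :
    (M ^ k).trace = Complex.ofReal (∑ i, h.eigenvalues i ^ k) := by
  have hU1 : (h.eigenvectorUnitary : Matrix d d ℂ) * star (h.eigenvectorUnitary : Matrix d d ℂ)
      = 1 := Unitary.coe_mul_star_self _
  have hU2 : star (h.eigenvectorUnitary : Matrix d d ℂ) * (h.eigenvectorUnitary : Matrix d d ℂ)
      = 1 := Unitary.coe_star_mul_self _
  have conj_pow : ∀ (U D : Matrix d d ℂ), star U * U = 1 → ∀ k : ℕ,
      (U * D * star U) ^ k = U * D ^ k * star U := by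
    intro U D hU k
    induction k with
    | zero =>
      simp only [pow_zero, Matrix.mul_one]
      exact (mul_eq_one_comm.mp hU).symm
    | succ k ih =>
      calc (U * D * star U) ^ (k + 1) = (U * D ^ k * star U) * (U * D * star U) := by
            rw [pow_succ, ih]
        _ = U * (D ^ k * ((star U * U) * (D * star U))) := by simp only [Matrix.mul_assoc]
        _ = U * D ^ (k + 1) * star U := by
            rw [hU, Matrix.one_mul, pow_succ]; simp only [Matrix.mul_assoc]
  have hpow := conj_pow _ (diagonal ((RCLike.ofReal : ℝ → ℂ) ∘ h.eigenvalues)) hU2 k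
  have hs := h.spectral_theorem
  rw [Unitary.conjStarAlgAut_apply] at hs
  rw [← hs] at hpow
  rw [hpow, Matrix.trace_mul_cycle, hU2, Matrix.one_mul, diagonal_pow, trace_diagonal]
  push_cast
  rfl

lemma state_eig_nonneg {d : ℕ} {M : Matrix (Fin d) (Fin d) ℂ} (hM : M ∈ stateSet d) (i : Fin d) :
    0 ≤ (hM.1.1 : M.IsHermitian).eigenvalues i := hM.1.eigenvalues_nonneg i

lemma state_eig_sum {d : ℕ} {M : Matrix (Fin d) (Fin d) ℂ} (hM : M ∈ stateSet d) :
    ∑ i, (hM.1.1 : M.IsHermitian).eigenvalues i = 1 := by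
  have h1 := trace_pow_eq (hM.1.1 : M.IsHermitian) 1
  have h2 : ((∑ i, (hM.1.1 : M.IsHermitian).eigenvalues i ^ 1 : ℝ) : ℂ) = ((1 : ℝ) : ℂ) := by
    rw [← h1, pow_one, hM.2]; norm_num
  have h3 := Complex.ofReal_injective h2
  simpa using h3

lemma state_eig_le_one {d : ℕ} {M : Matrix (Fin d) (Fin d) ℂ} (hM : M ∈ stateSet d) (i : Fin d) :
    (hM.1.1 : M.IsHermitian).eigenvalues i ≤ 1 := by
  rw [← state_eig_sum hM]
  exact Finset.single_le_sum (fun j _ => state_eig_nonneg hM j) (Finset.mem_univ i)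

lemma negMulLog_le_one {x : ℝ} (h0 : 0 ≤ x) (h1 : x ≤ 1) : Real.negMulLog x ≤ 1 := by
  rcases eq_or_lt_of_le h0 with h | h
  · simp [← h]
  · have hlog : Real.log x⁻¹ ≤ x⁻¹ - 1 := Real.log_le_sub_one_of_pos (by positivity)
    have hx : Real.negMulLog x = x * Real.log x⁻¹ := by
      rw [Real.log_inv, Real.negMulLog]; ring
    rw [hx]
    calc x * Real.log x⁻¹ ≤ x * (x⁻¹ - 1) := mul_le_mul_of_nonneg_left hlog h0
      _ = 1 - x := by field_simp
      _ ≤ 1 := by linarith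

lemma vnEntropy_state_bounds {d : ℕ} {M : Matrix (Fin d) (Fin d) ℂ} (hM : M ∈ stateSet d) :
    0 ≤ vnEntropy M ∧ vnEntropy M ≤ d := by
  rw [vnEntropy, dif_pos (hM.1.1 : M.IsHermitian)]
  constructor
  · exact Finset.sum_nonneg fun i _ =>
      Real.negMulLog_nonneg (state_eig_nonneg hM i) (state_eig_le_one hM i)
  · calc ∑ i, Real.negMulLog ((hM.1.1 : M.IsHermitian).eigenvalues i)
        ≤ ∑ _i : Fin d, (1 : ℝ) := Finset.sum_le_sum fun i _ =>
          negMulLog_le_one (state_eig_nonneg hM i) (state_eig_le_one hM i)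
      _ = d := by simp

/-! ### Measurability -/

section Meas
variable {α : Type*} [MeasurableSpace α]

lemma measurable_matrix_iff {m n : Type*} {g : α → Matrix m n ℂ} :
    Measurable g ↔ ∀ i j, Measurable fun a => g a i j := by
  constructor
  · intro hg i j
    exact (measurable_pi_apply j).comp ((measurable_pi_apply i).comp hg)
  · intro h
    apply measurable_pi_lambda
    intro i
    apply measurable_pi_lambda
    intro j
    exact h i j

lemma measurable_mat_pow {d : ℕ} (k : ℕ) :
    Measurable fun M : Matrix (Fin d) (Fin d) ℂ => M ^ k := by
  induction k with
  | zero => simp only [pow_zero]; exact measurable_const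
  | succ k ih =>
    have h : (fun M : Matrix (Fin d) (Fin d) ℂ => M ^ (k + 1)) = fun M => (M ^ k) * M := by
      funext M; rw [pow_succ]
    rw [h, measurable_matrix_iff]
    intro i j
    simp only [Matrix.mul_apply]
    apply Finset.measurable_sum
    intro l _
    exact (measurable_matrix_iff.mp ih i l).mul (measurable_matrix_iff.mp measurable_id l j)

lemma measurable_trace_pow_re {d : ℕ} (k : ℕ) :
    Measurable fun M : Matrix (Fin d) (Fin d) ℂ => ((M ^ k).trace).re := by
  apply Complex.measurable_re.comp
  have h : (fun M : Matrix (Fin d) (Fin d) ℂ => (M ^ k).trace)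
      = fun M => ∑ i, (M ^ k) i i := by
    funext M; rfl
  rw [h]
  exact Finset.measurable_sum _ fun i _ => measurable_matrix_iff.mp (measurable_mat_pow k) i i

lemma exists_poly_seq :
    ∃ p : ℕ → ℝ[X], Tendsto (fun n => dist ((p n).toContinuousMapOn I)
      (⟨fun x => Real.negMulLog x, Real.continuous_negMulLog.comp continuous_subtype_val⟩ : C(I, ℝ)))
      atTop (𝓝 0) := by
  set f : C(I, ℝ) :=
    ⟨fun x => Real.negMulLog x, Real.continuous_negMulLog.comp continuous_subtype_val⟩
  have hmem : f ∈ closure (polynomialFunctions I : Set C(I, ℝ)) := by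
    rw [← Subalgebra.topologicalClosure_coe, polynomialFunctions_closure_eq_top']
    simp
  obtain ⟨u, hu_mem, hu_tend⟩ := mem_closure_iff_seq_limit.mp hmem
  have hpoly : ∀ n, ∃ q : ℝ[X], q.toContinuousMapOn I = u n := by
    intro n
    have h2 := hu_mem n
    rw [polynomialFunctions_coe] at h2
    obtain ⟨q, hq⟩ := h2
    exact ⟨q, hq⟩
  choose p hp using hpoly
  refine ⟨p, ?_⟩
  have h3 : Tendsto (fun n => dist (u n) f) atTop (𝓝 0) :=
    (tendsto_iff_dist_tendsto_zero).mp hu_tend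
  simpa only [hp] using h3

lemma measurable_vnEntropy_state {d : ℕ} (g : α → Matrix (Fin d) (Fin d) ℂ)
    (hg : Measurable g) (hs : ∀ a, g a ∈ stateSet d) :
    Measurable fun a => vnEntropy (g a) := by
  obtain ⟨p, hp⟩ := exists_poly_seq
  set f : C(I, ℝ) :=
    ⟨fun x => Real.negMulLog x, Real.continuous_negMulLog.comp continuous_subtype_val⟩ with hf
  set F : ℕ → α → ℝ := fun n a =>
    ∑ k ∈ Finset.range ((p n).natDegree + 1), (p n).coeff k * ((g a ^ k).trace).re with hF
  have hFmeas : ∀ n, Measurable (F n) := by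
    intro n
    apply Finset.measurable_sum
    intro k _
    exact ((measurable_trace_pow_re k).comp hg).const_mul _
  apply measurable_of_tendsto_metrizable hFmeas
  rw [tendsto_pi_nhds]
  intro a
  set M := g a with hMdef
  have hMs : M ∈ stateSet d := hs a
  have h : M.IsHermitian := hMs.1.1
  have heig : ∀ i, (h.eigenvalues i) ∈ I := fun i =>
    ⟨state_eig_nonneg hMs i, state_eig_le_one hMs i⟩
  have htr : ∀ k, ((M ^ k).trace).re = ∑ i, h.eigenvalues i ^ k := by
    intro k
    rw [trace_pow_eq h k, Complex.ofReal_re]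
  have hFn : ∀ n, F n a = ∑ i, (p n).eval (h.eigenvalues i) := by
    intro n
    calc F n a = ∑ k ∈ Finset.range ((p n).natDegree + 1),
          ∑ i, (p n).coeff k * h.eigenvalues i ^ k := by
          apply Finset.sum_congr rfl
          intro k _
          rw [← hMdef, htr k, Finset.mul_sum]
      _ = ∑ i, ∑ k ∈ Finset.range ((p n).natDegree + 1),
          (p n).coeff k * h.eigenvalues i ^ k := Finset.sum_comm
      _ = ∑ i, (p n).eval (h.eigenvalues i) := by
          apply Finset.sum_congr rfl
          intro i _
          exact (Polynomial.eval_eq_sum_range _).symm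
  have hvn : vnEntropy M = ∑ i, f ⟨h.eigenvalues i, heig i⟩ := by
    rw [vnEntropy, dif_pos h]
    rfl
  have hbound : ∀ n, dist (F n a) (vnEntropy M) ≤ d * dist ((p n).toContinuousMapOn I) f := by
    intro n
    rw [Real.dist_eq, hFn n, hvn, ← Finset.sum_sub_distrib]
    calc |∑ i, ((p n).eval (h.eigenvalues i) - f ⟨h.eigenvalues i, heig i⟩)|
        ≤ ∑ i, |(p n).eval (h.eigenvalues i) - f ⟨h.eigenvalues i, heig i⟩| :=
          Finset.abs_sum_le_sum_abs _ _
      _ ≤ ∑ _i : Fin d, dist ((p n).toContinuousMapOn I) f := by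
          apply Finset.sum_le_sum
          intro i _
          have heval : (p n).eval (h.eigenvalues i)
              = ((p n).toContinuousMapOn I) ⟨h.eigenvalues i, heig i⟩ := rfl
          rw [heval, ← Real.dist_eq]
          exact ContinuousMap.dist_apply_le_dist _
      _ = d * dist ((p n).toContinuousMapOn I) f := by
          rw [Finset.sum_const, Finset.card_univ, Fintype.card_fin, nsmul_eq_mul]
  have hlim : Tendsto (fun n => (d : ℝ) * dist ((p n).toContinuousMapOn I) f) atTop (𝓝 0) := by
    simpa using hp.const_mul (d : ℝ)
  have hd0 := squeeze_zero (fun n => dist_nonneg) hbound hlim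
  exact tendsto_iff_dist_tendsto_zero.mpr hd0

end Meas

/-! ### Partial trace lemmas -/

section Ptrace
variable {dB dE : ℕ} {M : Matrix (Fin dB × Fin dE) (Fin dB × Fin dE) ℂ}

lemma posSemidef_ptraceE (hM : M.PosSemidef) : (ptraceE M).PosSemidef := by
  refine Matrix.PosSemidef.of_dotProduct_mulVec_nonneg ?_ fun x => ?_
  · ext b b'
    simp only [ptraceE, conjTranspose_apply, of_apply, star_sum]
    exact Finset.sum_congr rfl fun e _ => (hM.1.apply (b, e) (b', e))
  have hmv : ∀ (e : Fin dE) (p : Fin dB × Fin dE),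
      (M *ᵥ fun q : Fin dB × Fin dE => if q.2 = e then x q.1 else 0) p
        = ∑ b', M p (b', e) * x b' := by
    intro e p
    show ∑ p', M p p' * _ = _
    rw [Fintype.sum_prod_type]
    simp only [mul_ite, mul_zero]
    refine Finset.sum_congr rfl fun b' _ => ?_
    rw [Finset.sum_ite_eq' Finset.univ e (fun e2 => M p (b', e2) * x b')]
    simp
  have hS : ∀ e : Fin dE,
      (star (fun q : Fin dB × Fin dE => if q.2 = e then x q.1 else 0)
        ⬝ᵥ M *ᵥ (fun q : Fin dB × Fin dE => if q.2 = e then x q.1 else 0))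
      = ∑ b, star (x b) * ∑ b', M (b, e) (b', e) * x b' := by
    intro e
    show ∑ p : Fin dB × Fin dE, star _ * _ = _
    rw [Fintype.sum_prod_type]
    refine Finset.sum_congr rfl fun b _ => ?_
    have h2 : ∀ e1 : Fin dE, star (if e1 = e then x b else 0)
        * (M *ᵥ fun q : Fin dB × Fin dE => if q.2 = e then x q.1 else 0) (b, e1)
        = if e1 = e then star (x b) * ∑ b', M (b, e1) (b', e) * x b' else 0 := by
      intro e1
      rw [hmv e (b, e1)]
      by_cases h : e1 = e <;> simp [h]
    rw [Finset.sum_congr rfl fun e1 _ => h2 e1,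
      Finset.sum_ite_eq' Finset.univ e (fun e1 => star (x b) * ∑ b', M (b, e1) (b', e) * x b')]
    simp
  have key : star x ⬝ᵥ (ptraceE M) *ᵥ x
      = ∑ e : Fin dE, star (fun q : Fin dB × Fin dE => if q.2 = e then x q.1 else 0)
        ⬝ᵥ M *ᵥ (fun q : Fin dB × Fin dE => if q.2 = e then x q.1 else 0) := by
    rw [Finset.sum_congr rfl fun e _ => hS e]
    show ∑ b, star (x b) * (∑ b', (∑ e, M (b, e) (b', e)) * x b') = _
    calc ∑ b, star (x b) * (∑ b', (∑ e, M (b, e) (b', e)) * x b')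
        = ∑ b, star (x b) * ∑ e, ∑ b', M (b, e) (b', e) * x b' := by
          refine Finset.sum_congr rfl fun b _ => ?_
          congr 1
          calc ∑ b', (∑ e, M (b, e) (b', e)) * x b'
              = ∑ b', ∑ e, M (b, e) (b', e) * x b' :=
                Finset.sum_congr rfl fun b' _ => Finset.sum_mul _ _ _
            _ = ∑ e, ∑ b', M (b, e) (b', e) * x b' := Finset.sum_comm
      _ = ∑ b, ∑ e, star (x b) * ∑ b', M (b, e) (b', e) * x b' :=
          Finset.sum_congr rfl fun b _ => Finset.mul_sum _ _ _
      _ = ∑ e, ∑ b, star (x b) * ∑ b', M (b, e) (b', e) * x b' := Finset.sum_comm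
  rw [key]
  exact Finset.sum_nonneg fun e _ => hM.dotProduct_mulVec_nonneg _

lemma posSemidef_ptraceB (hM : M.PosSemidef) : (ptraceB M).PosSemidef := by
  refine Matrix.PosSemidef.of_dotProduct_mulVec_nonneg ?_ fun x => ?_
  · ext e e'
    simp only [ptraceB, conjTranspose_apply, of_apply, star_sum]
    exact Finset.sum_congr rfl fun b _ => (hM.1.apply (b, e) (b, e'))
  have hmv : ∀ (b : Fin dB) (p : Fin dB × Fin dE),
      (M *ᵥ fun q : Fin dB × Fin dE => if q.1 = b then x q.2 else 0) p
        = ∑ e', M p (b, e') * x e' := by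
    intro b p
    show ∑ p', M p p' * _ = _
    rw [Fintype.sum_prod_type]
    simp only [mul_ite, mul_zero]
    rw [Finset.sum_comm]
    refine Finset.sum_congr rfl fun e' _ => ?_
    rw [Finset.sum_ite_eq' Finset.univ b (fun b' => M p (b', e') * x e')]
    simp
  have hS : ∀ b : Fin dB,
      (star (fun q : Fin dB × Fin dE => if q.1 = b then x q.2 else 0)
        ⬝ᵥ M *ᵥ (fun q : Fin dB × Fin dE => if q.1 = b then x q.2 else 0))
      = ∑ e, star (x e) * ∑ e', M (b, e) (b, e') * x e' := by
    intro b
    show ∑ p : Fin dB × Fin dE, star _ * _ = _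
    rw [Fintype.sum_prod_type]
    have hterm : ∀ (b1 : Fin dB) (e : Fin dE), star (if b1 = b then x e else 0)
        * (M *ᵥ fun q : Fin dB × Fin dE => if q.1 = b then x q.2 else 0) (b1, e)
        = if b1 = b then star (x e) * ∑ e', M (b1, e) (b, e') * x e' else 0 := by
      intro b1 e
      rw [hmv b (b1, e)]
      by_cases h : b1 = b <;> simp [h]
    rw [Finset.sum_congr rfl fun b1 _ => Finset.sum_congr rfl fun e _ => hterm b1 e]
    rw [Finset.sum_comm]
    refine Finset.sum_congr rfl fun e _ => ?_
    rw [Finset.sum_ite_eq' Finset.univ b (fun b1 => star (x e) * ∑ e', M (b1, e) (b, e') * x e')]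
    simp
  have key : star x ⬝ᵥ (ptraceB M) *ᵥ x
      = ∑ b : Fin dB, star (fun q : Fin dB × Fin dE => if q.1 = b then x q.2 else 0)
        ⬝ᵥ M *ᵥ (fun q : Fin dB × Fin dE => if q.1 = b then x q.2 else 0) := by
    rw [Finset.sum_congr rfl fun b _ => hS b]
    show ∑ e, star (x e) * (∑ e', (∑ b, M (b, e) (b, e')) * x e') = _
    calc ∑ e, star (x e) * (∑ e', (∑ b, M (b, e) (b, e')) * x e')
        = ∑ e, star (x e) * ∑ b, ∑ e', M (b, e) (b, e') * x e' := by
          refine Finset.sum_congr rfl fun e _ => ?_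
          congr 1
          calc ∑ e', (∑ b, M (b, e) (b, e')) * x e'
              = ∑ e', ∑ b, M (b, e) (b, e') * x e' :=
                Finset.sum_congr rfl fun e' _ => Finset.sum_mul _ _ _
            _ = ∑ b, ∑ e', M (b, e) (b, e') * x e' := Finset.sum_comm
      _ = ∑ e, ∑ b, star (x e) * ∑ e', M (b, e) (b, e') * x e' :=
          Finset.sum_congr rfl fun e _ => Finset.mul_sum _ _ _
      _ = ∑ b, ∑ e, star (x e) * ∑ e', M (b, e) (b, e') * x e' := Finset.sum_comm
  rw [key]
  exact Finset.sum_nonneg fun b _ => hM.dotProduct_mulVec_nonneg _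

lemma trace_ptraceE : (ptraceE M).trace = M.trace := by
  simp only [Matrix.trace, Matrix.diag, ptraceE, of_apply, Fintype.sum_prod_type]

lemma trace_ptraceB : (ptraceB M).trace = M.trace := by
  rw [Matrix.trace, Matrix.trace]
  simp only [Matrix.diag, ptraceB, of_apply, Fintype.sum_prod_type]
  exact Finset.sum_comm

end Ptrace

/-! ### Channels map states to states -/

lemma conj_mem_state {dA dB dE : ℕ} (V : Matrix (Fin dB × Fin dE) (Fin dA) ℂ)
    (hV : Vᴴ * V = 1) {ρ : Matrix (Fin dA) (Fin dA) ℂ} (hρ : ρ ∈ stateSet dA) :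
    (V * ρ * Vᴴ).PosSemidef ∧ (V * ρ * Vᴴ).trace = 1 := by
  constructor
  · exact hρ.1.mul_mul_conjTranspose_same V
  · rw [Matrix.trace_mul_cycle, hV, Matrix.one_mul, hρ.2]

lemma chanPhi_mem_state {dA dB dE : ℕ} (V : Matrix (Fin dB × Fin dE) (Fin dA) ℂ)
    (hV : Vᴴ * V = 1) {ρ : Matrix (Fin dA) (Fin dA) ℂ} (hρ : ρ ∈ stateSet dA) :
    chanPhi V ρ ∈ stateSet dB := by
  obtain ⟨h1, h2⟩ := conj_mem_state V hV hρ
  exact ⟨posSemidef_ptraceE h1, by rw [chanPhi, trace_ptraceE, h2]⟩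

lemma chanPhiHat_mem_state {dA dB dE : ℕ} (V : Matrix (Fin dB × Fin dE) (Fin dA) ℂ)
    (hV : Vᴴ * V = 1) {ρ : Matrix (Fin dA) (Fin dA) ℂ} (hρ : ρ ∈ stateSet dA) :
    chanPhiHat V ρ ∈ stateSet dE := by
  obtain ⟨h1, h2⟩ := conj_mem_state V hV hρ
  exact ⟨posSemidef_ptraceB h1, by rw [chanPhiHat, trace_ptraceB, h2]⟩

end QProof
end AuxProofs

/-- The basic identity
`χ(μ) + I(B:E)_{V ρ̄(μ) Vᴴ} = χ(Φ(μ)) + χ(Φ̂(μ)) + ∫ I(B:E)_{V ρ Vᴴ} μ(dρ)`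
for generalized ensembles. -/
theorem gChi_add_qmi_identity
    (dA dB dE : ℕ) (hdA : 0 < dA) (hdB : 0 < dB) (hdE : 0 < dE)
    (V : Matrix (Fin dB × Fin dE) (Fin dA) ℂ) (hV : Vᴴ * V = 1)
    (μ : ProbabilityMeasure (stateSet dA)) :
    gChi μ + qmi (V * barycenter μ * Vᴴ)
      = gChiOut (chanPhi V) μ + gChiOut (chanPhiHat V) μ
        + ∫ ρ : stateSet dA, qmi (V * ρ.1 * Vᴴ) ∂(μ : Measure (stateSet dA)) := by
  classical
  set μm : Measure (stateSet dA) := (μ : Measure (stateSet dA)) with hμm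
  -- the barycenter is Hermitian
  have hbar : (barycenter μ).IsHermitian := by
    ext i j
    simp only [conjTranspose_apply, barycenter, Matrix.of_apply]
    calc star (∫ ρ : stateSet dA, ρ.1 j i ∂μm)
        = ∫ ρ : stateSet dA, (starRingEnd ℂ) (ρ.1 j i) ∂μm := integral_conj.symm
      _ = ∫ ρ : stateSet dA, ρ.1 i j ∂μm := by
          apply integral_congr_ae
          apply ae_of_all
          intro ρ
          have h := ρ.2.1.1
          calc (starRingEnd ℂ) (ρ.1 j i) = ρ.1ᴴ i j := rfl
            _ = ρ.1 i j := by rw [h]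
  -- measurability
  have hmeas1 : Measurable fun ρ : stateSet dA => vnEntropy ρ.1 :=
    QProof.measurable_vnEntropy_state _ measurable_subtype_coe (fun a => a.2)
  have hmeasPhi : Measurable fun ρ : stateSet dA => chanPhi V ρ.1 := by
    rw [QProof.measurable_matrix_iff]
    intro i j
    have h : (fun ρ : stateSet dA => chanPhi V ρ.1 i j)
        = fun ρ => ∑ e, ∑ l, (∑ k, V (i, e) k * ρ.1 k l) * Vᴴ l (j, e) := by
      funext ρ
      simp [chanPhi, ptraceE, Matrix.mul_apply]
    rw [h]
    apply Finset.measurable_sum; intro e _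
    apply Finset.measurable_sum; intro l _
    apply Measurable.mul_const
    apply Finset.measurable_sum; intro k _
    exact (QProof.measurable_matrix_iff.mp measurable_subtype_coe k l).const_mul _
  have hmeasPhiHat : Measurable fun ρ : stateSet dA => chanPhiHat V ρ.1 := by
    rw [QProof.measurable_matrix_iff]
    intro i j
    have h : (fun ρ : stateSet dA => chanPhiHat V ρ.1 i j)
        = fun ρ => ∑ b, ∑ l, (∑ k, V (b, i) k * ρ.1 k l) * Vᴴ l (b, j) := by
      funext ρ
      simp [chanPhiHat, ptraceB, Matrix.mul_apply]
    rw [h]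
    apply Finset.measurable_sum; intro b _
    apply Finset.measurable_sum; intro l _
    apply Measurable.mul_const
    apply Finset.measurable_sum; intro k _
    exact (QProof.measurable_matrix_iff.mp measurable_subtype_coe k l).const_mul _
  have hmeas2 : Measurable fun ρ : stateSet dA => vnEntropy (chanPhi V ρ.1) :=
    QProof.measurable_vnEntropy_state _ hmeasPhi
      (fun a => QProof.chanPhi_mem_state V hV a.2)
  have hmeas3 : Measurable fun ρ : stateSet dA => vnEntropy (chanPhiHat V ρ.1) :=
    QProof.measurable_vnEntropy_state _ hmeasPhiHat
      (fun a => QProof.chanPhiHat_mem_state V hV a.2)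
  -- integrability
  have hbound : ∀ (dd : ℕ) (f : stateSet dA → ℝ), Measurable f →
      (∀ a, 0 ≤ f a ∧ f a ≤ dd) → Integrable f μm := by
    intro dd f hf hb
    refine ⟨hf.aestronglyMeasurable, ?_⟩
    apply HasFiniteIntegral.of_bounded (C := (dd : ℝ))
    apply ae_of_all
    intro a
    rw [Real.norm_eq_abs, abs_le]
    refine ⟨by linarith [(hb a).1, Nat.cast_nonneg (α := ℝ) dd], (hb a).2⟩
  have hint1 : Integrable (fun ρ : stateSet dA => vnEntropy ρ.1) μm :=
    hbound dA _ hmeas1 (fun a => QProof.vnEntropy_state_bounds a.2)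
  have hint2 : Integrable (fun ρ : stateSet dA => vnEntropy (chanPhi V ρ.1)) μm :=
    hbound dB _ hmeas2
      (fun a => QProof.vnEntropy_state_bounds (QProof.chanPhi_mem_state V hV a.2))
  have hint3 : Integrable (fun ρ : stateSet dA => vnEntropy (chanPhiHat V ρ.1)) μm :=
    hbound dE _ hmeas3
      (fun a => QProof.vnEntropy_state_bounds (QProof.chanPhiHat_mem_state V hV a.2))
  -- pointwise identity for the integrand
  have hfun : (fun ρ : stateSet dA => qmi (V * ρ.1 * Vᴴ)) = fun ρ : stateSet dA =>
      vnEntropy (chanPhi V ρ.1) + vnEntropy (chanPhiHat V ρ.1) - vnEntropy ρ.1 := by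
    funext ρ
    show vnEntropy (ptraceE (V * ρ.1 * Vᴴ)) + vnEntropy (ptraceB (V * ρ.1 * Vᴴ))
        - vnEntropy (V * ρ.1 * Vᴴ) = _
    rw [QProof.vnEntropy_conj_isometry V hV ρ.1 ρ.2.1.1]
    rfl
  have hsplit : ∫ ρ : stateSet dA, qmi (V * ρ.1 * Vᴴ) ∂μm
      = (∫ ρ : stateSet dA, vnEntropy (chanPhi V ρ.1) ∂μm)
        + (∫ ρ : stateSet dA, vnEntropy (chanPhiHat V ρ.1) ∂μm)
        - ∫ ρ : stateSet dA, vnEntropy ρ.1 ∂μm := by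
    have h23 : Integrable (fun ρ : stateSet dA =>
        vnEntropy (chanPhi V ρ.1) + vnEntropy (chanPhiHat V ρ.1)) μm := hint2.add hint3
    rw [hfun, integral_sub h23 hint1, integral_add hint2 hint3]
  have hqbar : qmi (V * barycenter μ * Vᴴ)
      = vnEntropy (chanPhi V (barycenter μ)) + vnEntropy (chanPhiHat V (barycenter μ))
        - vnEntropy (barycenter μ) := by
    show vnEntropy (ptraceE (V * barycenter μ * Vᴴ)) + vnEntropy (ptraceB (V * barycenter μ * Vᴴ))
        - vnEntropy (V * barycenter μ * Vᴴ) = _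
    rw [QProof.vnEntropy_conj_isometry V hV _ hbar]
    rfl
  rw [hqbar, hsplit, gChi, gChiOut, gChiOut]
  ring
end

section
/- Let d_A, d_B, d_E be positive natural numbers and V an isometry from ℂ^{d_A} to ℂ^{d_B} ⊗ ℂ^{d_E}, with associated channel Φ(ρ) = Tr_E(V ρ Vᴴ). Then for every finite ensemble {π_i, ρ_i}_{i∈Fin m} of states on ℂ^{d_A}, the entropic disturbance satisfies χ({π_i, ρ_i}) − χ({π_i, Φ(ρ_i)}) ≤ 2·log d_E. -/
open Matrix ComplexOrder

open Finset Polynomial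

noncomputable section EDProof

lemma classical_klein {ι : Type*} [Fintype ι] [DecidableEq ι] (p s : ι → ℝ) (c : ι → ι → ℝ)
    (hp0 : ∀ i, 0 ≤ p i) (hp1 : ∑ i, p i = 1)
    (hs0 : ∀ j, 0 ≤ s j) (hs1 : ∑ j, s j ≤ 1)
    (hc0 : ∀ i j, 0 ≤ c i j) (hrow : ∀ i, ∑ j, c i j = 1) (hcol : ∀ j, ∑ i, c i j = 1)
    (hsupp : ∀ i j, s j = 0 → p i * c i j = 0) :
    ∑ i, Real.negMulLog (p i) ≤ ∑ j, (- Real.log (s j)) * (∑ i, p i * c i j) := by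
  classical
  set r : ι → ℝ := fun i => ∑ j, c i j * s j with hr
  have hr0 : ∀ i, 0 ≤ r i := fun i => sum_nonneg fun j _ => mul_nonneg (hc0 i j) (hs0 j)
  have key : ∀ i, Real.negMulLog (p i) ≤ p i * (∑ j, c i j * (- Real.log (s j))) + (r i - p i) := by
    intro i
    by_cases hpi : p i = 0
    · simpa [hpi, Real.negMulLog] using hr0 i
    · have hpi' : 0 < p i := lt_of_le_of_ne (hp0 i) (Ne.symm hpi)
      set t : Finset ι := univ.filter (fun j => c i j ≠ 0) with ht
      have hspos : ∀ j ∈ t, 0 < s j := by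
        intro j hj
        rcases (hs0 j).lt_or_eq with h | h
        · exact h
        · exact absurd ((mul_eq_zero.mp (hsupp i j h.symm)).resolve_left hpi)
            (by simpa using (mem_filter.mp hj).2)
      have hwt : ∑ j ∈ t, c i j = 1 := by
        rw [← hrow i]; exact sum_filter_ne_zero univ
      have hrt : ∑ j ∈ t, c i j * s j = r i := by
        rw [hr]
        refine sum_filter_of_ne fun j _ hne hc => hne (by simp [hc])
      have hlt : ∑ j ∈ t, c i j * (- Real.log (s j)) = ∑ j, c i j * (- Real.log (s j)) := by
        refine sum_filter_of_ne fun j _ hne hc => hne (by simp [hc])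
      have hjen : ∑ j ∈ t, c i j * Real.log (s j) ≤ Real.log (r i) := by
        have h := (strictConcaveOn_log_Ioi.concaveOn).le_map_sum
          (t := t) (w := fun j => c i j) (p := s)
          (fun j _ => hc0 i j) hwt (fun j hj => hspos j hj)
        simpa [smul_eq_mul, hrt] using h
      have hrpos : 0 < r i := by
        have hne : t.Nonempty := by
          by_contra hemp
          rw [not_nonempty_iff_eq_empty] at hemp
          rw [hemp] at hwt; simp at hwt
        obtain ⟨j₀, hj₀⟩ := hne
        have hcj : 0 < c i j₀ := lt_of_le_of_ne (hc0 i j₀)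
          (Ne.symm (by simpa using (mem_filter.mp hj₀).2))
        calc (0:ℝ) < c i j₀ * s j₀ := mul_pos hcj (hspos j₀ hj₀)
        _ ≤ r i := by
            rw [← hrt]
            exact single_le_sum (fun j hj => mul_nonneg (hc0 i j) (hspos j hj).le) hj₀
      have hlog : p i * Real.log (r i) - p i * Real.log (p i) ≤ r i - p i := by
        have h1 : Real.log (r i / p i) ≤ r i / p i - 1 :=
          Real.log_le_sub_one_of_pos (div_pos hrpos hpi')
        rw [Real.log_div hrpos.ne' hpi'.ne'] at h1
        have h2 := mul_le_mul_of_nonneg_left h1 hpi'.le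
        calc p i * Real.log (r i) - p i * Real.log (p i)
            = p i * (Real.log (r i) - Real.log (p i)) := by ring
          _ ≤ p i * (r i / p i - 1) := h2
          _ = r i - p i := by field_simp
      have hjen' : p i * (- Real.log (r i)) ≤ p i * (∑ j, c i j * (- Real.log (s j))) := by
        apply mul_le_mul_of_nonneg_left _ hpi'.le
        rw [← hlt]
        have : ∑ j ∈ t, c i j * (- Real.log (s j)) = - ∑ j ∈ t, c i j * Real.log (s j) := by
          simp [mul_neg]
        rw [this]
        linarith [hjen]
      have : Real.negMulLog (p i) ≤ p i * (- Real.log (r i)) + (r i - p i) := by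
        simp only [Real.negMulLog]
        nlinarith [hlog]
      linarith [this, hjen']
  have hsum := sum_le_sum fun i (_ : i ∈ univ) => key i
  have hrsum : ∑ i, r i = ∑ j, s j := by
    rw [hr, sum_comm]
    congr 1
    ext j
    rw [← sum_mul, hcol j, one_mul]
  have hswap : ∑ i, p i * (∑ j, c i j * (- Real.log (s j)))
      = ∑ j, (- Real.log (s j)) * (∑ i, p i * c i j) := by
    simp_rw [mul_sum]
    rw [sum_comm]
    congr 1; ext j; congr 1; ext i; ring
  calc ∑ i, Real.negMulLog (p i)
      ≤ ∑ i, (p i * (∑ j, c i j * (- Real.log (s j))) + (r i - p i)) := hsum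
    _ = ∑ j, (- Real.log (s j)) * (∑ i, p i * c i j) + (∑ i, r i - ∑ i, p i) := by
        rw [sum_add_distrib, hswap, sum_sub_distrib]
    _ ≤ ∑ j, (- Real.log (s j)) * (∑ i, p i * c i j) := by
        rw [hrsum, hp1]; linarith [hs1]

lemma charpoly_unitary_conj {ι : Type*} [Fintype ι] [DecidableEq ι] (W M : Matrix ι ι ℂ)
    (hW : W * Wᴴ = 1) : (W * M * Wᴴ).charpoly = M.charpoly := by
  have hmap : (W.map (C : ℂ →+* ℂ[X])) * (Wᴴ.map C) = 1 := by
    rw [← Matrix.map_mul, hW, Matrix.map_one C (map_zero C) (map_one C)]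
  have hch : charmatrix (W * M * Wᴴ)
      = (W.map C) * charmatrix M * (Wᴴ.map C) := by
    unfold charmatrix
    simp only [RingHom.mapMatrix_apply]
    rw [Matrix.map_mul, Matrix.map_mul]
    rw [Matrix.scalar_apply, ← Matrix.smul_one_eq_diagonal]
    rw [Matrix.mul_sub, Matrix.sub_mul]
    congr 1
    rw [Matrix.mul_smul, mul_one, Matrix.smul_mul, hmap]
  unfold Matrix.charpoly
  rw [hch, Matrix.det_mul, Matrix.det_mul]
  have : (W.map (C : ℂ →+* ℂ[X])).det * (Wᴴ.map C).det = 1 := by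
    rw [← Matrix.det_mul, hmap, Matrix.det_one]
  calc (W.map C).det * (charmatrix M).det * (Wᴴ.map C).det
      = (charmatrix M).det * ((W.map C).det * (Wᴴ.map C).det) := by ring
    _ = (charmatrix M).det := by rw [this, mul_one]

lemma charpoly_diagonal_real {ι : Type*} [Fintype ι] [DecidableEq ι] (d : ι → ℝ) :
    (Matrix.diagonal (fun i => (d i : ℂ))).charpoly
      = (Multiset.map (fun z : ℂ => X - C z)
          (Multiset.map (fun i => (d i : ℂ)) Finset.univ.val)).prod := by
  have hch : charmatrix (Matrix.diagonal (fun i => (d i : ℂ)))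
      = Matrix.diagonal (fun i => (X : ℂ[X]) - C (d i : ℂ)) := by
    ext i j
    by_cases h : i = j
    · subst h; simp
    · simp [h, Matrix.diagonal_apply_ne _ h]
  unfold Matrix.charpoly
  rw [hch, Matrix.det_diagonal]
  rw [Multiset.map_map]
  rfl

lemma charpoly_hermitian {ι : Type*} [Fintype ι] [DecidableEq ι]
    {M : Matrix ι ι ℂ} (hM : M.IsHermitian) :
    M.charpoly = (Multiset.map (fun z : ℂ => X - C z)
        (Multiset.map (fun i => (hM.eigenvalues i : ℂ)) Finset.univ.val)).prod := by
  have hU : (hM.eigenvectorUnitary : Matrix ι ι ℂ) * (hM.eigenvectorUnitary : Matrix ι ι ℂ)ᴴ = 1 := by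
    simpa [Matrix.star_eq_conjTranspose] using
      (Matrix.mem_unitaryGroup_iff.mp hM.eigenvectorUnitary.2)
  have hsp := hM.spectral_theorem
  have : M = (hM.eigenvectorUnitary : Matrix ι ι ℂ) *
      Matrix.diagonal (fun i => (hM.eigenvalues i : ℂ)) *
      (hM.eigenvectorUnitary : Matrix ι ι ℂ)ᴴ := by
    convert hsp using 2
    simp [Function.comp_def, Matrix.star_eq_conjTranspose]
  have h5 : M.charpoly = ((hM.eigenvectorUnitary : Matrix ι ι ℂ) *
      Matrix.diagonal (fun i => (hM.eigenvalues i : ℂ)) *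
      (hM.eigenvectorUnitary : Matrix ι ι ℂ)ᴴ).charpoly := congrArg _ this
  rw [h5, charpoly_unitary_conj _ _ hU, charpoly_diagonal_real]

lemma eig_multiset_of_charpoly {ι κ : Type*} [Fintype ι] [DecidableEq ι] [Fintype κ]
    {M : Matrix ι ι ℂ} (hM : M.IsHermitian) (d : κ → ℝ)
    (h : M.charpoly = (Multiset.map (fun z : ℂ => X - C z)
        (Multiset.map (fun k => (d k : ℂ)) Finset.univ.val)).prod) :
    Multiset.map hM.eigenvalues Finset.univ.val = Multiset.map d Finset.univ.val := by
  have h2 := (charpoly_hermitian hM).symm.trans h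
  have h3 := congrArg Polynomial.roots h2
  rw [roots_multiset_prod_X_sub_C, roots_multiset_prod_X_sub_C] at h3
  have h4 : Multiset.map (Complex.ofReal) (Multiset.map hM.eigenvalues Finset.univ.val)
      = Multiset.map (Complex.ofReal) (Multiset.map d Finset.univ.val) := by
    rw [Multiset.map_map, Multiset.map_map]
    exact h3
  exact Multiset.map_injective Complex.ofReal_injective h4

lemma sum_f_eig_of_charpoly {ι κ : Type*} [Fintype ι] [DecidableEq ι] [Fintype κ]
    {M : Matrix ι ι ℂ} (hM : M.IsHermitian) (d : κ → ℝ)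
    (h : M.charpoly = (Multiset.map (fun z : ℂ => X - C z)
        (Multiset.map (fun k => (d k : ℂ)) Finset.univ.val)).prod)
    (f : ℝ → ℝ) : ∑ i, f (hM.eigenvalues i) = ∑ k, f (d k) := by
  have h1 := congrArg (fun m => (Multiset.map f m).sum) (eig_multiset_of_charpoly hM d h)
  simp only [Multiset.map_map] at h1
  have e1 : ∑ i, f (hM.eigenvalues i) = (Multiset.map (f ∘ hM.eigenvalues) Finset.univ.val).sum := rfl
  have e2 : ∑ k, f (d k) = (Multiset.map (f ∘ d) Finset.univ.val).sum := rfl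
  rw [e1, e2]
  exact h1

lemma isHermitian_decomp {ι : Type*} [Fintype ι] [DecidableEq ι] (W : Matrix ι ι ℂ)
    (d : ι → ℝ) : (W * Matrix.diagonal (fun i => (d i : ℂ)) * Wᴴ).IsHermitian := by
  unfold Matrix.IsHermitian
  rw [Matrix.conjTranspose_mul, Matrix.conjTranspose_mul, Matrix.conjTranspose_conjTranspose]
  rw [Matrix.diagonal_conjTranspose]
  have : star (fun i => (d i : ℂ)) = fun i => (d i : ℂ) := by
    funext i; simp [Complex.conj_ofReal]
  rw [this, Matrix.mul_assoc]

lemma vnEntropy_decomp {ι : Type*} [Fintype ι] [DecidableEq ι] (W : Matrix ι ι ℂ)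
    (hW : W * Wᴴ = 1) (d : ι → ℝ) :
    vnEntropy (W * Matrix.diagonal (fun i => (d i : ℂ)) * Wᴴ) = ∑ i, Real.negMulLog (d i) := by
  have hH := isHermitian_decomp W d
  rw [vnEntropy, dif_pos hH]
  exact sum_f_eig_of_charpoly hH d
    (by rw [charpoly_unitary_conj _ _ hW, charpoly_diagonal_real]) _

lemma vnEntropy_eq_of_charpoly {ι κ : Type*} [Fintype ι] [DecidableEq ι] [Fintype κ] [DecidableEq κ]
    {M : Matrix ι ι ℂ} {N : Matrix κ κ ℂ} (hM : M.IsHermitian) (hN : N.IsHermitian)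
    (h : M.charpoly = N.charpoly) : vnEntropy M = vnEntropy N := by
  rw [vnEntropy, dif_pos hM, vnEntropy, dif_pos hN]
  exact sum_f_eig_of_charpoly hM hN.eigenvalues (h.trans (charpoly_hermitian hN)) _

lemma conj_diag_apply {ι : Type*} [Fintype ι] [DecidableEq ι] (W : Matrix ι ι ℂ) (v : ι → ℂ)
    (x y : ι) : (W * Matrix.diagonal v * Wᴴ) x y
      = ∑ i, v i * W x i * (starRingEnd ℂ) (W y i) := by
  rw [Matrix.mul_apply]
  congr 1; ext i
  rw [Matrix.mul_diagonal, Matrix.conjTranspose_apply]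
  simp only [Complex.star_def]
  ring

lemma sum_support_subtype {κ M : Type*} [Fintype κ] [AddCommMonoid M] [DecidableEq κ]
    (d : κ → ℝ) (F : κ → M) (h0 : ∀ j, d j = 0 → F j = 0) :
    ∑ j : {j : κ // d j ≠ 0}, F j.1 = ∑ j, F j := by
  classical
  rw [← Finset.sum_subtype (Finset.univ.filter (fun j => d j ≠ 0))
    (by intro x; simp) F]
  refine Finset.sum_filter_of_ne ?_
  intro j _ hne hdj
  exact hne (h0 j hdj)

lemma vnEntropy_outer {ι κ : Type*} [Fintype ι] [DecidableEq ι] [Fintype κ] [DecidableEq κ]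
    (M : Matrix ι ι ℂ) (d : κ → ℝ) (g : κ → ι → ℂ)
    (hortho : ∀ j j', d j ≠ 0 → d j' ≠ 0 →
      star (g j) ⬝ᵥ g j' = if j = j' then 1 else 0)
    (hM : ∀ x y, M x y = ∑ j, (d j : ℂ) * g j x * (starRingEnd ℂ) (g j y)) :
    vnEntropy M = ∑ j, Real.negMulLog (d j) := by
  classical
  set S := {j : κ // d j ≠ 0}
  have hgE : Orthonormal ℂ (fun j : S => ((WithLp.equiv 2 (ι → ℂ)).symm (g j.1) :
      EuclideanSpace ℂ ι)) := by
    rw [orthonormal_iff_ite]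
    intro j j'
    rw [show inner ℂ _ _ = dotProduct (g j'.1) (star (g j.1)) from rfl, dotProduct_comm]
    rw [hortho j.1 j'.1 j.2 j'.2]
    by_cases h : j = j'
    · simp [h]
    · rw [if_neg h, if_neg (fun hh => h (Subtype.ext hh))]
  have hcard : Fintype.card S ≤ Fintype.card ι := by
    have h1 := hgE.linearIndependent.fintype_card_le_finrank
    rwa [finrank_euclideanSpace] at h1
  obtain ⟨emb⟩ := Function.Embedding.nonempty_of_card_le hcard
  set v : ι → EuclideanSpace ℂ ι := fun i =>
    if h : ∃ j : S, emb j = i then (WithLp.equiv 2 (ι → ℂ)).symm (g h.choose.1) else 0 with hv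
  have hchoose : ∀ j : S, (show ∃ j' : S, emb j' = emb j from ⟨j, rfl⟩).choose = j := by
    intro j
    exact emb.injective (show ∃ j' : S, emb j' = emb j from ⟨j, rfl⟩).choose_spec
  have hvemb : ∀ j : S, v (emb j) = (WithLp.equiv 2 (ι → ℂ)).symm (g j.1) := by
    intro j
    rw [hv]
    simp only [dif_pos (⟨j, rfl⟩ : ∃ j' : S, emb j' = emb j)]
    rw [hchoose j]
  have hon : Orthonormal ℂ ((Set.range emb).restrict v) := by
    rw [orthonormal_iff_ite]
    rintro ⟨i, j, rfl⟩ ⟨i', j', rfl⟩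
    show inner ℂ (v (emb j)) (v (emb j')) = _
    rw [hvemb, hvemb]
    have := (orthonormal_iff_ite (𝕜 := ℂ)).mp hgE j j'
    rw [this]
    by_cases h : j = j'
    · simp [h]
    · rw [if_neg h, if_neg]
      intro hh
      exact h (emb.injective (by exact_mod_cast congrArg Subtype.val hh))
  obtain ⟨b, hb⟩ := hon.exists_orthonormalBasis_extension_of_card_eq
    (by rw [finrank_euclideanSpace])
  set W : Matrix ι ι ℂ := fun x j => b j x with hW
  have hWup : Wᴴ * W = 1 := by
    ext j j'
    rw [Matrix.mul_apply, Matrix.one_apply]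
    have := (orthonormal_iff_ite (𝕜 := ℂ)).mp b.orthonormal j j'
    rw [PiLp.inner_apply] at this
    simp only [RCLike.inner_apply] at this
    rw [← this]
    simp [hW, Matrix.conjTranspose_apply, mul_comm]
    rfl
  have hWW : W * Wᴴ = 1 := mul_eq_one_comm.mp hWup
  set d' : ι → ℝ := fun i => if h : ∃ j : S, emb j = i then d h.choose.1 else 0 with hd'
  have hd'emb : ∀ j : S, d' (emb j) = d j.1 := by
    intro j
    rw [hd']
    simp only [dif_pos (⟨j, rfl⟩ : ∃ j' : S, emb j' = emb j)]
    rw [hchoose j]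
  have hMeq : M = W * Matrix.diagonal (fun i => (d' i : ℂ)) * Wᴴ := by
    ext x y
    rw [conj_diag_apply, hM]
    have hzero : ∀ i ∈ univ, i ∉ univ.map emb →
        (d' i : ℂ) * W x i * (starRingEnd ℂ) (W y i) = 0 := by
      intro i _ hi
      have hne : ¬ ∃ j : S, emb j = i := by
        intro ⟨j, hj⟩; exact hi (Finset.mem_map.mpr ⟨j, Finset.mem_univ j, hj⟩)
      simp only [d', dif_neg hne]
      simp
    rw [← Finset.sum_subset (Finset.subset_univ (univ.map emb)) hzero, Finset.sum_map]
    have hterm : ∀ j : S, (d' (emb j) : ℂ) * W x (emb j) * (starRingEnd ℂ) (W y (emb j))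
        = (d j.1 : ℂ) * g j.1 x * (starRingEnd ℂ) (g j.1 y) := by
      intro j
      have hbv : b (emb j) = (WithLp.equiv 2 (ι → ℂ)).symm (g j.1) := by
        rw [hb (emb j) ⟨j, rfl⟩, hvemb]
      rw [hd'emb]
      simp only [hW, hbv]
      rfl
    rw [Finset.sum_congr rfl (fun j _ => hterm j)]
    exact (sum_support_subtype d (fun j => (d j : ℂ) * g j x * (starRingEnd ℂ) (g j y))
      (fun j hdj => by simp [hdj])).symm
  rw [hMeq, vnEntropy_decomp W hWW d']
  -- ∑ i negMulLog d' i = ∑ j negMulLog d j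
  have hzero : ∀ i ∈ univ, i ∉ univ.map emb → Real.negMulLog (d' i) = 0 := by
    intro i _ hi
    have hne : ¬ ∃ j : S, emb j = i := by
      intro ⟨j, hj⟩; exact hi (Finset.mem_map.mpr ⟨j, Finset.mem_univ j, hj⟩)
    simp only [d', dif_neg hne]
    exact Real.negMulLog_zero
  rw [← Finset.sum_subset (Finset.subset_univ (univ.map emb)) hzero, Finset.sum_map]
  have : ∀ j : S, Real.negMulLog (d' (emb j)) = Real.negMulLog (d j.1) := fun j => by
    rw [hd'emb]
  rw [Finset.sum_congr rfl (fun j _ => this j)]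
  exact sum_support_subtype d (fun j => Real.negMulLog (d j))
    (fun j hdj => by simp [hdj])

lemma spectral_decomp {ι : Type*} [Fintype ι] [DecidableEq ι] {M : Matrix ι ι ℂ}
    (hM : M.IsHermitian) :
    M = (hM.eigenvectorUnitary : Matrix ι ι ℂ) *
      Matrix.diagonal (fun i => (hM.eigenvalues i : ℂ)) *
      (hM.eigenvectorUnitary : Matrix ι ι ℂ)ᴴ := by
  convert hM.spectral_theorem using 2
  simp [Function.comp_def, Matrix.star_eq_conjTranspose]

lemma eigU_mul_conj {ι : Type*} [Fintype ι] [DecidableEq ι] {M : Matrix ι ι ℂ}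
    (hM : M.IsHermitian) :
    (hM.eigenvectorUnitary : Matrix ι ι ℂ) * (hM.eigenvectorUnitary : Matrix ι ι ℂ)ᴴ = 1 := by
  simpa [Matrix.star_eq_conjTranspose] using
    (Matrix.mem_unitaryGroup_iff.mp hM.eigenvectorUnitary.2)

lemma eigU_conj_mul {ι : Type*} [Fintype ι] [DecidableEq ι] {M : Matrix ι ι ℂ}
    (hM : M.IsHermitian) :
    (hM.eigenvectorUnitary : Matrix ι ι ℂ)ᴴ * (hM.eigenvectorUnitary : Matrix ι ι ℂ) = 1 :=
  mul_eq_one_comm.mp (eigU_mul_conj hM)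

lemma sum_eigenvalues_eq_one {ι : Type*} [Fintype ι] [DecidableEq ι] {M : Matrix ι ι ℂ}
    (hM : M.IsHermitian) (htr : M.trace = 1) : ∑ i, hM.eigenvalues i = 1 := by
  have h1 : M.trace = ∑ i, (hM.eigenvalues i : ℂ) := by
    conv_lhs => rw [spectral_decomp hM]
    rw [Matrix.trace_mul_cycle, eigU_conj_mul hM, one_mul, Matrix.trace_diagonal]
  rw [htr] at h1
  exact_mod_cast h1.symm

lemma matrix_klein {ι : Type*} [Fintype ι] [DecidableEq ι] {ω : Matrix ι ι ℂ}
    (hω : ω.PosSemidef) (htr : ω.trace = 1)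
    (W : Matrix ι ι ℂ) (hW : Wᴴ * W = 1)
    (s : ι → ℝ) (hs0 : ∀ j, 0 ≤ s j) (hs1 : ∑ j, s j ≤ 1)
    (hsupp : ∀ j, s j = 0 → ω *ᵥ (fun x => W x j) = 0) :
    vnEntropy ω ≤
      ∑ j, (- Real.log (s j)) * (star (fun x => W x j) ⬝ᵥ ω *ᵥ (fun x => W x j)).re := by
  classical
  have hH := hω.1
  set U : Matrix ι ι ℂ := (hH.eigenvectorUnitary : Matrix ι ι ℂ) with hUdef
  set p : ι → ℝ := hH.eigenvalues with hpdef
  set Mx : Matrix ι ι ℂ := Uᴴ * W with hMxdef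
  set c : ι → ι → ℝ := fun i j => Complex.normSq (Mx i j) with hcdef
  have hU1 : U * Uᴴ = 1 := eigU_mul_conj hH
  have hU2 : Uᴴ * U = 1 := eigU_conj_mul hH
  have hWW : W * Wᴴ = 1 := mul_eq_one_comm.mp hW
  have hMx1 : Mxᴴ * Mx = 1 := by
    rw [hMxdef, Matrix.conjTranspose_mul, Matrix.conjTranspose_conjTranspose]
    calc Wᴴ * U * (Uᴴ * W) = Wᴴ * (U * Uᴴ) * W := by
          rw [Matrix.mul_assoc, Matrix.mul_assoc, Matrix.mul_assoc]
      _ = 1 := by rw [hU1, Matrix.mul_one, hW]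
  have hMx2 : Mx * Mxᴴ = 1 := mul_eq_one_comm.mp hMx1
  have hrow : ∀ i, ∑ j, c i j = 1 := by
    intro i
    have h1 : (Mx * Mxᴴ) i i = ∑ j, ((c i j : ℝ) : ℂ) := by
      rw [Matrix.mul_apply]
      congr 1; ext j
      rw [Matrix.conjTranspose_apply]
      exact Complex.mul_conj (Mx i j)
    rw [hMx2, Matrix.one_apply_eq] at h1
    exact_mod_cast h1.symm
  have hcol : ∀ j, ∑ i, c i j = 1 := by
    intro j
    have h1 : (Mxᴴ * Mx) j j = ∑ i, ((c i j : ℝ) : ℂ) := by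
      rw [Matrix.mul_apply]
      congr 1; ext i
      rw [Matrix.conjTranspose_apply, mul_comm]
      exact Complex.mul_conj (Mx i j)
    rw [hMx1, Matrix.one_apply_eq] at h1
    exact_mod_cast h1.symm
  have hspec : ω = U * Matrix.diagonal (fun i => (p i : ℂ)) * Uᴴ := spectral_decomp hH
  have hDMx : Uᴴ * ω * W = Matrix.diagonal (fun i => (p i : ℂ)) * Mx := by
    conv_lhs => rw [hspec]
    rw [hMxdef]
    calc Uᴴ * (U * Matrix.diagonal (fun i => (p i : ℂ)) * Uᴴ) * W
        = (Uᴴ * U) * Matrix.diagonal (fun i => (p i : ℂ)) * (Uᴴ * W) := by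
          simp only [Matrix.mul_assoc]
      _ = Matrix.diagonal (fun i => (p i : ℂ)) * (Uᴴ * W) := by rw [hU2, Matrix.one_mul]
  have hsupp' : ∀ i j, s j = 0 → p i * c i j = 0 := by
    intro i j hsj
    have hcol0 := hsupp j hsj
    have h1 : ∀ x, (ω * W) x j = 0 := by
      intro x
      have h := congrFun hcol0 x
      rw [Matrix.mul_apply]
      simpa [Matrix.mulVec, dotProduct] using h
    have h2 : (Uᴴ * ω * W) i j = 0 := by
      rw [Matrix.mul_assoc, Matrix.mul_apply]
      apply Finset.sum_eq_zero
      intro x _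
      rw [h1 x, mul_zero]
    rw [hDMx, Matrix.diagonal_mul] at h2
    rcases mul_eq_zero.mp h2 with h | h
    · have : p i = 0 := by exact_mod_cast h
      rw [this, zero_mul]
    · rw [hcdef]
      simp only
      rw [h, map_zero, mul_zero]
  have htarget : ∀ j, (star (fun x => W x j) ⬝ᵥ ω *ᵥ (fun x => W x j)).re
      = ∑ i, p i * c i j := by
    intro j
    have h1 : star (fun x => W x j) ⬝ᵥ ω *ᵥ (fun x => W x j) = (Wᴴ * ω * W) j j := by
      rw [Matrix.mul_assoc, Matrix.mul_apply]
      simp only [dotProduct, Matrix.mulVec, Matrix.mul_apply,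
        Matrix.conjTranspose_apply, Pi.star_apply]
    have h2 : Wᴴ * ω * W = Mxᴴ * (Matrix.diagonal (fun i => (p i : ℂ)) * Mx) := by
      rw [← hDMx, hMxdef, Matrix.conjTranspose_mul, Matrix.conjTranspose_conjTranspose]
      calc Wᴴ * ω * W = Wᴴ * (U * Uᴴ) * ω * W := by rw [hU1, Matrix.mul_one]
        _ = Wᴴ * U * (Uᴴ * ω * W) := by simp only [Matrix.mul_assoc]
    have h3 : (Wᴴ * ω * W) j j = ∑ i, ((p i * c i j : ℝ) : ℂ) := by
      rw [h2, Matrix.mul_apply]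
      congr 1; ext i
      rw [Matrix.conjTranspose_apply, Matrix.diagonal_mul]
      calc star (Mx i j) * ((p i : ℂ) * Mx i j)
          = (p i : ℂ) * (Mx i j * star (Mx i j)) := by ring
        _ = (p i : ℂ) * ((Complex.normSq (Mx i j) : ℝ) : ℂ) :=
            congrArg (fun z => (p i : ℂ) * z) (Complex.mul_conj (Mx i j))
        _ = ((p i * c i j : ℝ) : ℂ) := by push_cast; rfl
    rw [h1, h3]
    have : (∑ i, ((p i * c i j : ℝ) : ℂ)) = ((∑ i, p i * c i j : ℝ) : ℂ) := by push_cast; ring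
    rw [this, Complex.ofReal_re]
  have hent : vnEntropy ω = ∑ i, Real.negMulLog (p i) := by
    rw [vnEntropy, dif_pos hH]
  rw [hent]
  have hmain := classical_klein p s c hω.eigenvalues_nonneg (sum_eigenvalues_eq_one hH htr)
    hs0 hs1 (fun i j => Complex.normSq_nonneg _) hrow hcol hsupp'
  calc ∑ i, Real.negMulLog (p i) ≤ ∑ j, (- Real.log (s j)) * (∑ i, p i * c i j) := hmain
    _ = ∑ j, (- Real.log (s j)) * (star (fun x => W x j) ⬝ᵥ ω *ᵥ (fun x => W x j)).re := by
        congr 1; ext j; rw [htarget j]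

noncomputable section
def ptr2 {ι κ : Type*} [Fintype κ] (M : Matrix (ι × κ) (ι × κ) ℂ) : Matrix ι ι ℂ :=
  Matrix.of fun b b' => ∑ e, M (b, e) (b', e)

def ptr1 {ι κ : Type*} [Fintype ι] (M : Matrix (ι × κ) (ι × κ) ℂ) : Matrix κ κ ℂ :=
  Matrix.of fun e e' => ∑ b, M (b, e) (b, e')

def embv {ι κ : Type*} [DecidableEq κ] (w : ι → ℂ) (e : κ) : ι × κ → ℂ :=
  fun q => w q.1 * (if q.2 = e then 1 else 0)
end

lemma ptr2_isHermitian {ι κ : Type*} [Fintype ι] [Fintype κ] {M : Matrix (ι × κ) (ι × κ) ℂ}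
    (hM : M.IsHermitian) : (ptr2 M).IsHermitian := by
  ext b b'
  simp only [Matrix.conjTranspose_apply, ptr2, Matrix.of_apply, star_sum]
  congr 1; ext e
  rw [← Matrix.conjTranspose_apply, hM.eq]

lemma ptr2_trace {ι κ : Type*} [Fintype ι] [Fintype κ] (M : Matrix (ι × κ) (ι × κ) ℂ) :
    (ptr2 M).trace = M.trace := by
  simp only [Matrix.trace, Matrix.diag, ptr2, Matrix.of_apply]
  exact (Fintype.sum_prod_type (f := fun q : ι × κ => M q q)).symm

lemma embv_dotProduct {ι κ : Type*} [Fintype ι] [Fintype κ] [DecidableEq κ]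
    (M : Matrix (ι × κ) (ι × κ) ℂ) (w : ι → ℂ) :
    ∑ e : κ, star (embv w e) ⬝ᵥ M *ᵥ embv w e = star w ⬝ᵥ (ptr2 M) *ᵥ w := by
  have inner : ∀ e : κ, ∀ q : ι × κ, (M *ᵥ embv w e) q = ∑ b' : ι, M q (b', e) * w b' := by
    intro e q
    simp only [Matrix.mulVec, dotProduct, embv]
    rw [Fintype.sum_prod_type]
    congr 1; ext b'
    rw [Finset.sum_eq_single e]
    · simp
    · intro e' _ hne; simp [hne]
    · intro h; exact absurd (Finset.mem_univ e) h
  have lhs : ∀ e : κ, star (embv w e) ⬝ᵥ M *ᵥ embv w e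
      = ∑ b : ι, star (w b) * ∑ b' : ι, M (b, e) (b', e) * w b' := by
    intro e
    simp only [dotProduct, Pi.star_apply]
    rw [Fintype.sum_prod_type]
    congr 1; ext b
    rw [Finset.sum_eq_single e]
    · rw [inner e (b, e)]
      simp [embv]
    · intro e' _ hne
      simp [embv, hne]
    · intro h; exact absurd (Finset.mem_univ e) h
  rw [Finset.sum_congr rfl (fun e _ => lhs e)]
  calc ∑ e : κ, ∑ b : ι, star (w b) * ∑ b' : ι, M (b, e) (b', e) * w b'
      = ∑ b : ι, ∑ b' : ι, (∑ e : κ, M (b, e) (b', e)) * (star (w b) * w b') := by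
        rw [Finset.sum_comm]
        congr 1; ext b
        simp only [Finset.mul_sum]
        rw [Finset.sum_comm]
        congr 1; ext b'
        rw [Finset.sum_mul]
        congr 1; ext e
        ring
    _ = star w ⬝ᵥ (ptr2 M) *ᵥ w := by
        simp only [dotProduct, Matrix.mulVec, ptr2, Matrix.of_apply, Pi.star_apply,
          Finset.mul_sum]
        congr 1; ext b; congr 1; ext b'
        ring
lemma ptr2_posSemidef {ι κ : Type*} [Fintype ι] [Fintype κ] [DecidableEq κ]
    {M : Matrix (ι × κ) (ι × κ) ℂ} (hM : M.PosSemidef) : (ptr2 M).PosSemidef := by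
  refine Matrix.posSemidef_iff_dotProduct_mulVec.mpr ⟨?_, ?_⟩
  · exact ptr2_isHermitian hM.1
  · intro x
    rw [← embv_dotProduct M x]
    exact Finset.sum_nonneg fun e _ => hM.dotProduct_mulVec_nonneg _

lemma klein_A {ι κ : Type*} [Fintype ι] [DecidableEq ι] [Fintype κ] [DecidableEq κ]
    {ω : Matrix (ι × κ) (ι × κ) ℂ} (hω : ω.PosSemidef) (htr : ω.trace = 1) :
    vnEntropy ω ≤ vnEntropy (ptr2 ω) + Real.log (Fintype.card κ) := by
  classical
  haveI hne : Nonempty κ := by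
    by_contra h
    rw [not_nonempty_iff] at h
    have : ω.trace = 0 := by
      simp only [Matrix.trace, Matrix.diag]
      rw [Finset.univ_eq_empty, Finset.sum_empty]
    rw [htr] at this
    exact one_ne_zero this
  have hB := ptr2_posSemidef hω
  have hBH := hB.1
  set q : ι → ℝ := hBH.eigenvalues with hq
  set UB : Matrix ι ι ℂ := (hBH.eigenvectorUnitary : Matrix ι ι ℂ) with hUB
  set n : ℕ := Fintype.card κ with hn
  have hn0 : (0:ℝ) < n := by
    have := Fintype.card_pos (α := κ)
    exact_mod_cast this
  have hq0 : ∀ b, 0 ≤ q b := hB.eigenvalues_nonneg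
  have hq1 : ∑ b, q b = 1 := sum_eigenvalues_eq_one hBH (by rw [ptr2_trace, htr])
  set W : Matrix (ι × κ) (ι × κ) ℂ :=
    fun x j => UB x.1 j.1 * (if x.2 = j.2 then 1 else 0) with hWdef
  have hUU : UBᴴ * UB = 1 := eigU_conj_mul hBH
  have hW : Wᴴ * W = 1 := by
    ext j j'
    rw [Matrix.mul_apply, Fintype.sum_prod_type]
    have hterm : ∀ b e, Wᴴ j (b, e) * W (b, e) j'
        = (star (UB b j.1) * UB b j'.1) *
          ((if e = j.2 then (1:ℂ) else 0) * (if e = j'.2 then 1 else 0)) := by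
      intro b e
      rw [Matrix.conjTranspose_apply]
      have hstar : star (W (b, e) j) = star (UB b j.1) * (if e = j.2 then (1:ℂ) else 0) := by
        simp only [hWdef]
        by_cases h1 : e = j.2 <;> simp [h1]
      rw [hstar]
      simp only [hWdef]
      ring
    calc ∑ b, ∑ e, Wᴴ j (b, e) * W (b, e) j'
        = ∑ b, ∑ e, (star (UB b j.1) * UB b j'.1) *
            ((if e = j.2 then (1:ℂ) else 0) * (if e = j'.2 then 1 else 0)) := by
          exact Finset.sum_congr rfl fun b _ => Finset.sum_congr rfl fun e _ => hterm b e
      _ = (∑ b, star (UB b j.1) * UB b j'.1) *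
            (∑ e, (if e = j.2 then (1:ℂ) else 0) * (if e = j'.2 then 1 else 0)) := by
          rw [Finset.sum_mul_sum]
      _ = (1 : Matrix ι ι ℂ) j.1 j'.1 * (if j.2 = j'.2 then 1 else 0) := by
          congr 1
          · rw [← hUU, Matrix.mul_apply]
            exact Finset.sum_congr rfl fun b _ => by rw [Matrix.conjTranspose_apply]
          · rw [Finset.sum_eq_single j.2]
            · simp
            · intro e _ hne; simp [hne]
            · intro h; exact absurd (Finset.mem_univ j.2) h
      _ = (1 : Matrix (ι × κ) (ι × κ) ℂ) j j' := by
          rw [Matrix.one_apply, Matrix.one_apply]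
          by_cases h1 : j.1 = j'.1 <;> by_cases h2 : j.2 = j'.2 <;>
            simp [h1, h2, Prod.ext_iff]
  -- eigenvector columns
  have hub : ∀ b₀ : ι, (fun b => UB b b₀) = fun b =>
      (WithLp.equiv 2 (ι → ℂ)) (hBH.eigenvectorBasis b₀) b := by
    intro b₀; funext b
    exact hBH.eigenvectorUnitary_apply b b₀
  have hmulvec : ∀ b₀ : ι, (ptr2 ω) *ᵥ (fun b => UB b b₀) = fun b => (q b₀ : ℂ) * UB b b₀ := by
    intro b₀
    rw [hub b₀]
    have := hBH.mulVec_eigenvectorBasis b₀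
    funext b
    have hb := congrFun this b
    simpa [Pi.smul_apply, Complex.real_smul, hq, hUB] using hb
  have hnorm : ∀ b₀ : ι, star (fun b => UB b b₀) ⬝ᵥ (fun b => UB b b₀) = 1 := by
    intro b₀
    have h1 : (UBᴴ * UB) b₀ b₀ = star (fun b => UB b b₀) ⬝ᵥ (fun b => UB b b₀) := by
      rw [Matrix.mul_apply]
      simp only [dotProduct, Pi.star_apply, Matrix.conjTranspose_apply]
    rw [← h1, hUU, Matrix.one_apply_eq]
  have hquadsum : ∀ b₀ : ι, ∑ e : κ,
      star (embv (fun b => UB b b₀) e) ⬝ᵥ ω *ᵥ embv (fun b => UB b b₀) e = (q b₀ : ℂ) := by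
    intro b₀
    rw [embv_dotProduct ω (fun b => UB b b₀), hmulvec b₀]
    have : star (fun b => UB b b₀) ⬝ᵥ (fun b => (q b₀ : ℂ) * UB b b₀)
        = (q b₀ : ℂ) * (star (fun b => UB b b₀) ⬝ᵥ (fun b => UB b b₀)) := by
      simp only [dotProduct, Finset.mul_sum, Pi.star_apply]
      congr 1; ext b; ring
    rw [this, hnorm b₀, mul_one]
  set s : ι × κ → ℝ := fun j => q j.1 / n with hs
  have hs0 : ∀ j, 0 ≤ s j := fun j => div_nonneg (hq0 j.1) hn0.le
  have hs1 : ∑ j, s j ≤ 1 := by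
    have h0 : ∑ j : ι × κ, s j = ∑ b, ∑ e : κ, s (b, e) := Fintype.sum_prod_type _
    rw [h0]
    have : ∀ b, ∑ _e : κ, q b / n = q b := by
      intro b
      rw [Finset.sum_const, nsmul_eq_mul, Finset.card_univ, ← hn]
      field_simp
    rw [Finset.sum_congr rfl fun b _ => this b, hq1]
  have hcolW : ∀ j : ι × κ, (fun x => W x j) = embv (fun b => UB b j.1) j.2 := by
    intro j; rfl
  have hsupp : ∀ j, s j = 0 → ω *ᵥ (fun x => W x j) = 0 := by
    intro j hsj
    have hqj : q j.1 = 0 := by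
      rcases div_eq_zero_iff.mp hsj with h | h
      · exact h
      · exact absurd h hn0.ne'
    have hzero : ∑ e : κ,
        star (embv (fun b => UB b j.1) e) ⬝ᵥ ω *ᵥ embv (fun b => UB b j.1) e = 0 := by
      rw [hquadsum j.1, hqj, Complex.ofReal_zero]
    have hterm0 : ∀ e : κ,
        star (embv (fun b => UB b j.1) e) ⬝ᵥ ω *ᵥ embv (fun b => UB b j.1) e = 0 := by
      have := (Finset.sum_eq_zero_iff_of_nonneg (fun e _ => hω.dotProduct_mulVec_nonneg (embv (fun b => UB b j.1) e))).mp hzero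
      exact fun e => this e (Finset.mem_univ e)
    rw [hcolW j]
    exact (hω.dotProduct_mulVec_zero_iff _).mp (hterm0 j.2)
  have hmain := matrix_klein hω htr W hW s hs0 hs1 hsupp
  have hrhs : ∑ j : ι × κ, (- Real.log (s j)) * (star (fun x => W x j) ⬝ᵥ ω *ᵥ (fun x => W x j)).re
      = ∑ b, (- Real.log (q b / n)) * q b := by
    rw [Fintype.sum_prod_type]
    congr 1; ext b
    have : ∀ e : κ, (- Real.log (s (b, e))) *
        (star (fun x => W x (b, e)) ⬝ᵥ ω *ᵥ (fun x => W x (b, e))).re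
        = (- Real.log (q b / n)) *
          (star (embv (fun b' => UB b' b) e) ⬝ᵥ ω *ᵥ embv (fun b' => UB b' b) e).re := by
      intro e
      rw [hcolW (b, e)]
    rw [Finset.sum_congr rfl fun e _ => this e, ← Finset.mul_sum]
    congr 1
    have hre : ∑ e : κ, (star (embv (fun b' => UB b' b) e) ⬝ᵥ ω *ᵥ embv (fun b' => UB b' b) e).re
        = ((∑ e : κ, star (embv (fun b' => UB b' b) e) ⬝ᵥ ω *ᵥ embv (fun b' => UB b' b) e)).re := by
      rw [Complex.re_sum]
    rw [hre, hquadsum b, Complex.ofReal_re]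
  rw [hrhs] at hmain
  have hfinal : ∑ b, (- Real.log (q b / n)) * q b
      = vnEntropy (ptr2 ω) + Real.log n := by
    have hterm : ∀ b, (- Real.log (q b / n)) * q b
        = Real.negMulLog (q b) + q b * Real.log n := by
      intro b
      rcases (hq0 b).lt_or_eq with h | h
      · rw [Real.log_div h.ne' hn0.ne', Real.negMulLog]
        ring
      · rw [← h]
        simp [Real.negMulLog]
    rw [Finset.sum_congr rfl fun b _ => hterm b, Finset.sum_add_distrib]
    congr 1
    · rw [vnEntropy, dif_pos hBH]
    · rw [← Finset.sum_mul, hq1, one_mul]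
  rw [hfinal] at hmain
  exact hmain

lemma trace_reindex {ι κ : Type*} [Fintype ι] [Fintype κ] [DecidableEq ι] [DecidableEq κ]
    (e : ι ≃ κ) (M : Matrix ι ι ℂ) : (Matrix.reindex e e M).trace = M.trace := by
  simp only [Matrix.trace, Matrix.diag, Matrix.reindex_apply, Matrix.submatrix_apply]
  exact Equiv.sum_comp e.symm fun x => M x x

lemma klein_A1 {μ ν : Type*} [Fintype μ] [DecidableEq μ] [Fintype ν] [DecidableEq ν]
    {N : Matrix (μ × ν) (μ × ν) ℂ} (hN : N.PosSemidef) (htr : N.trace = 1) :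
    vnEntropy N ≤ vnEntropy (ptr1 N) + Real.log (Fintype.card μ) := by
  classical
  set E : μ × ν ≃ ν × μ := Equiv.prodComm μ ν with hE
  set N2 : Matrix (ν × μ) (ν × μ) ℂ := Matrix.reindex E E N with hN2
  have hN2psd : N2.PosSemidef := hN.submatrix E.symm
  have hN2tr : N2.trace = 1 := by rw [hN2, trace_reindex, htr]
  have hpe : ptr2 N2 = ptr1 N := by
    ext e e'
    simp [ptr2, ptr1, hN2, Matrix.reindex_apply, Matrix.submatrix_apply, hE]
  have hent : vnEntropy N = vnEntropy N2 := by
    refine vnEntropy_eq_of_charpoly hN.1 hN2psd.1 ?_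
    rw [hN2, Matrix.charpoly_reindex]
  rw [hent, ← hpe]
  exact klein_A hN2psd hN2tr

lemma sqrt_decomp {ι : Type*} [Fintype ι] [DecidableEq ι] {ρ : Matrix ι ι ℂ}
    (hρ : ρ.PosSemidef) :
    ∃ T : Matrix ι ι ℂ, ρ = T * Tᴴ ∧
      Tᴴ * T = Matrix.diagonal (fun i => ((hρ.1.eigenvalues i : ℝ) : ℂ)) := by
  classical
  set U : Matrix ι ι ℂ := (hρ.1.eigenvectorUnitary : Matrix ι ι ℂ) with hU
  set p : ι → ℝ := hρ.1.eigenvalues with hp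
  set Ds : Matrix ι ι ℂ := Matrix.diagonal (fun i => ((Real.sqrt (p i) : ℝ) : ℂ)) with hDs
  have hDsH : Dsᴴ = Ds := by
    rw [hDs, Matrix.diagonal_conjTranspose]
    have h : (star fun i => ((Real.sqrt (p i) : ℝ) : ℂ))
        = fun i => ((Real.sqrt (p i) : ℝ) : ℂ) := by
      funext i
      simp [Complex.star_def, Complex.conj_ofReal]
    rw [h]
  have hDD : Ds * Ds = Matrix.diagonal (fun i => ((p i : ℝ) : ℂ)) := by
    rw [hDs, Matrix.diagonal_mul_diagonal]
    have hfn : (fun i => ((Real.sqrt (p i) : ℝ) : ℂ) * ((Real.sqrt (p i) : ℝ) : ℂ))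
        = fun i => ((p i : ℝ) : ℂ) := by
      funext i
      rw [← Complex.ofReal_mul, Real.mul_self_sqrt (hρ.eigenvalues_nonneg i)]
    rw [hfn]
  refine ⟨U * Ds, ?_, ?_⟩
  · rw [Matrix.conjTranspose_mul, hDsH]
    calc ρ = U * Matrix.diagonal (fun i => ((p i : ℝ) : ℂ)) * Uᴴ := spectral_decomp hρ.1
      _ = U * Ds * (Ds * Uᴴ) := by rw [← hDD]; simp only [Matrix.mul_assoc]
  · rw [Matrix.conjTranspose_mul, hDsH]
    calc Ds * Uᴴ * (U * Ds) = Ds * (Uᴴ * U) * Ds := by simp only [Matrix.mul_assoc]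
      _ = Ds * Ds := by rw [eigU_conj_mul hρ.1, Matrix.mul_one]
      _ = Matrix.diagonal (fun i => ((p i : ℝ) : ℂ)) := hDD

lemma vnEntropy_diagonal {ι : Type*} [Fintype ι] [DecidableEq ι] (d : ι → ℝ) :
    vnEntropy (Matrix.diagonal (fun i => ((d i : ℝ) : ℂ))) = ∑ i, Real.negMulLog (d i) := by
  have h := vnEntropy_decomp (1 : Matrix ι ι ℂ) (by simp) d
  simpa using h

lemma vnEntropy_mul_conjT {ι κ : Type*} [Fintype ι] [DecidableEq ι] [Fintype κ] [DecidableEq κ]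
    (S : Matrix ι κ ℂ) : vnEntropy (S * Sᴴ) = vnEntropy (Sᴴ * S) := by
  classical
  set N : Matrix κ κ ℂ := Sᴴ * S with hNdef
  have hN : N.PosSemidef := Matrix.posSemidef_conjTranspose_mul_self S
  have hNH := hN.1
  set q : κ → ℝ := hNH.eigenvalues with hq
  set WN : Matrix κ κ ℂ := (hNH.eigenvectorUnitary : Matrix κ κ ℂ) with hWN
  have hWW : WN * WNᴴ = 1 := eigU_mul_conj hNH
  have hUU : WNᴴ * WN = 1 := eigU_conj_mul hNH
  set w : κ → κ → ℂ := fun j => fun k => WN k j with hw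
  have hub : ∀ j, w j = fun k => (WithLp.equiv 2 (κ → ℂ)) (hNH.eigenvectorBasis j) k := by
    intro j; funext k
    exact hNH.eigenvectorUnitary_apply k j
  have hmulvec : ∀ j, N *ᵥ w j = fun k => (q j : ℂ) * w j k := by
    intro j
    rw [hub j]
    have := hNH.mulVec_eigenvectorBasis j
    funext k
    have hk := congrFun this k
    simpa [Pi.smul_apply, Complex.real_smul] using hk
  have hwnorm : ∀ j j', star (w j) ⬝ᵥ w j' = if j = j' then (1:ℂ) else 0 := by
    intro j j'
    have h1 : (WNᴴ * WN) j j' = star (w j) ⬝ᵥ w j' := by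
      rw [Matrix.mul_apply]
      simp only [dotProduct, Pi.star_apply, Matrix.conjTranspose_apply, hw]
    rw [← h1, hUU, Matrix.one_apply]
  have F1 : ∀ j j', star (S *ᵥ w j) ⬝ᵥ (S *ᵥ w j')
      = (q j' : ℂ) * (if j = j' then 1 else 0) := by
    intro j j'
    have h1 : star (S *ᵥ w j) ⬝ᵥ (S *ᵥ w j') = star (w j) ⬝ᵥ (N *ᵥ w j') := by
      conv_rhs => rw [hNdef, ← Matrix.mulVec_mulVec, Matrix.dotProduct_mulVec]
      rw [Matrix.star_mulVec]
    rw [h1, hmulvec j']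
    have h2 : star (w j) ⬝ᵥ (fun k => (q j' : ℂ) * w j' k)
        = (q j' : ℂ) * (star (w j) ⬝ᵥ w j') := by
      simp only [dotProduct, Finset.mul_sum, Pi.star_apply]
      congr 1; ext k; ring
    rw [h2, hwnorm j j']
  have F2 : ∀ j, q j = 0 → S *ᵥ w j = 0 := by
    intro j hqj
    have := F1 j j
    rw [hqj, if_pos rfl, Complex.ofReal_zero, zero_mul] at this
    exact dotProduct_star_self_eq_zero.mp this
  set g : κ → ι → ℂ := fun j => fun x => ((Real.sqrt (q j))⁻¹ : ℂ) * (S *ᵥ w j) x with hg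
  have hortho : ∀ j j', q j ≠ 0 → q j' ≠ 0 →
      star (g j) ⬝ᵥ g j' = if j = j' then 1 else 0 := by
    intro j j' hj hj'
    have hqpos : 0 < q j := lt_of_le_of_ne (hN.eigenvalues_nonneg j) (Ne.symm hj)
    have hqpos' : 0 < q j' := lt_of_le_of_ne (hN.eigenvalues_nonneg j') (Ne.symm hj')
    have h1 : star (g j) ⬝ᵥ g j'
        = ((Real.sqrt (q j))⁻¹ : ℂ) * ((Real.sqrt (q j'))⁻¹ : ℂ)
          * (star (S *ᵥ w j) ⬝ᵥ (S *ᵥ w j')) := by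
      simp only [hg, dotProduct, Pi.star_apply, star_mul', star_inv₀,
        Complex.star_def, Complex.conj_ofReal, Finset.mul_sum]
      congr 1; ext x; ring
    rw [h1, F1 j j']
    by_cases h : j = j'
    · subst h
      rw [if_pos rfl, mul_one]
      have hre : ((Real.sqrt (q j))⁻¹ : ℝ) * ((Real.sqrt (q j))⁻¹ : ℝ) * q j = 1 := by
        have hs : Real.sqrt (q j) ≠ 0 := Real.sqrt_ne_zero'.mpr hqpos
        rw [← Real.sqrt_mul_self (le_of_lt hqpos)]
        field_simp
        rw [Real.sq_sqrt (Real.sqrt_nonneg _)]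
      calc ((Real.sqrt (q j) : ℂ))⁻¹ * ((Real.sqrt (q j) : ℂ))⁻¹ * (q j : ℂ)
          = ((((Real.sqrt (q j))⁻¹ : ℝ) * ((Real.sqrt (q j))⁻¹ : ℝ) * q j : ℝ) : ℂ) := by
            push_cast; ring
        _ = 1 := by rw [hre]; norm_num
    · rw [if_neg h]
      simp
  have hM : ∀ x y, (S * Sᴴ) x y = ∑ j, (q j : ℂ) * g j x * (starRingEnd ℂ) (g j y) := by
    intro x y
    set SW : Matrix ι κ ℂ := S * WN with hSW
    have hSWapp : ∀ j z, SW z j = (S *ᵥ w j) z := by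
      intro j z
      rw [hSW, Matrix.mul_apply]
      simp only [Matrix.mulVec, dotProduct, hw]
    have hSWc : SW * SWᴴ = S * Sᴴ := by
      rw [hSW, Matrix.conjTranspose_mul]
      calc S * WN * (WNᴴ * Sᴴ) = S * (WN * WNᴴ) * Sᴴ := by simp only [Matrix.mul_assoc]
        _ = S * Sᴴ := by rw [hWW, Matrix.mul_one]
    have hterm : ∀ j, (q j : ℂ) * g j x * (starRingEnd ℂ) (g j y)
        = SW x j * (starRingEnd ℂ) (SW y j) := by
      intro j
      by_cases hqj : q j = 0
      · rw [hqj]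
        have h0 := F2 j hqj
        rw [hSWapp j x, hSWapp j y, h0]
        simp
      · have hqpos : 0 < q j := lt_of_le_of_ne (hN.eigenvalues_nonneg j) (Ne.symm hqj)
        rw [hSWapp j x, hSWapp j y]
        simp only [hg, _root_.map_mul, map_inv₀, Complex.conj_ofReal]
        have hcoef : ((q j : ℝ) : ℂ) * ((Real.sqrt (q j) : ℂ))⁻¹ * ((Real.sqrt (q j) : ℂ))⁻¹ = 1 := by
          have hre : ((Real.sqrt (q j))⁻¹ : ℝ) * ((Real.sqrt (q j))⁻¹ : ℝ) * q j = 1 := by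
            have hs : Real.sqrt (q j) ≠ 0 := Real.sqrt_ne_zero'.mpr hqpos
            rw [← Real.sqrt_mul_self (le_of_lt hqpos)]
            field_simp
            rw [Real.sq_sqrt (Real.sqrt_nonneg _)]
          calc ((q j : ℝ) : ℂ) * ((Real.sqrt (q j) : ℂ))⁻¹ * ((Real.sqrt (q j) : ℂ))⁻¹
              = ((((Real.sqrt (q j))⁻¹ : ℝ) * ((Real.sqrt (q j))⁻¹ : ℝ) * q j : ℝ) : ℂ) := by
                push_cast; ring
            _ = 1 := by rw [hre]; norm_num
        calc (q j : ℂ) * (((Real.sqrt (q j) : ℂ))⁻¹ * (S *ᵥ w j) x)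
              * (((Real.sqrt (q j) : ℂ))⁻¹ * (starRingEnd ℂ) ((S *ᵥ w j) y))
            = ((q j : ℂ) * ((Real.sqrt (q j) : ℂ))⁻¹ * ((Real.sqrt (q j) : ℂ))⁻¹)
              * ((S *ᵥ w j) x * (starRingEnd ℂ) ((S *ᵥ w j) y)) := by ring
          _ = (S *ᵥ w j) x * (starRingEnd ℂ) ((S *ᵥ w j) y) := by rw [hcoef, one_mul]
    rw [Finset.sum_congr rfl fun j _ => hterm j]
    rw [← hSWc, Matrix.mul_apply]
    congr 1
  have h1 := vnEntropy_outer (S * Sᴴ) q g hortho hM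
  rw [h1, vnEntropy, dif_pos hNH]

lemma vnEntropy_iso {ι κ : Type*} [Fintype ι] [DecidableEq ι] [Fintype κ] [DecidableEq κ]
    (V : Matrix κ ι ℂ) (hV : Vᴴ * V = 1) {ρ : Matrix ι ι ℂ} (hρ : ρ.PosSemidef) :
    vnEntropy (V * ρ * Vᴴ) = vnEntropy ρ := by
  obtain ⟨T, hT1, hT2⟩ := sqrt_decomp hρ
  have hA : V * ρ * Vᴴ = (V * T) * (V * T)ᴴ := by
    rw [hT1, Matrix.conjTranspose_mul]
    simp only [Matrix.mul_assoc]
  have hAA : (V * T)ᴴ * (V * T) = Matrix.diagonal (fun i => ((hρ.1.eigenvalues i : ℝ) : ℂ)) := by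
    rw [Matrix.conjTranspose_mul]
    calc Tᴴ * Vᴴ * (V * T) = Tᴴ * (Vᴴ * V) * T := by simp only [Matrix.mul_assoc]
      _ = Tᴴ * T := by rw [hV, Matrix.mul_one]
      _ = _ := hT2
  rw [hA, vnEntropy_mul_conjT, hAA, vnEntropy_diagonal, vnEntropy, dif_pos hρ.1]

lemma klein_B {ι κ : Type*} [Fintype ι] [DecidableEq ι] [Fintype κ] [DecidableEq κ]
    {ω : Matrix (ι × κ) (ι × κ) ℂ} (hω : ω.PosSemidef) (htr : ω.trace = 1) :
    vnEntropy (ptr2 ω) ≤ vnEntropy ω + Real.log (Fintype.card κ) := by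
  classical
  obtain ⟨T, hT1, hT2⟩ := sqrt_decomp hω
  set S : Matrix ι (κ × (ι × κ)) ℂ := fun b er => T (b, er.1) er.2 with hS
  have hSS : S * Sᴴ = ptr2 ω := by
    ext b b'
    rw [Matrix.mul_apply]
    have h1 : ∀ er : κ × (ι × κ), S b er * Sᴴ er b' = T (b, er.1) er.2
        * (starRingEnd ℂ) (T (b', er.1) er.2) := by
      intro er
      rw [Matrix.conjTranspose_apply]
      rfl
    rw [Finset.sum_congr rfl fun er _ => h1 er]
    rw [Fintype.sum_prod_type]
    have h2 : ∀ e : κ, ∑ r : ι × κ, T (b, e) r * (starRingEnd ℂ) (T (b', e) r)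
        = ω (b, e) (b', e) := by
      intro e
      rw [hT1, Matrix.mul_apply]
      exact Finset.sum_congr rfl fun r _ => by rw [Matrix.conjTranspose_apply]; rfl
    rw [Finset.sum_congr rfl fun e _ => h2 e]
    rfl
  have hNpsd : (Sᴴ * S).PosSemidef := Matrix.posSemidef_conjTranspose_mul_self S
  have hNtr : (Sᴴ * S).trace = 1 := by
    rw [Matrix.trace_mul_comm, hSS, ptr2_trace, htr]
  have hptr1 : ptr1 (Sᴴ * S) = Matrix.diagonal (fun i => ((hω.1.eigenvalues i : ℝ) : ℂ)) := by
    rw [← hT2]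
    ext r r'
    simp only [ptr1, Matrix.of_apply]
    have h1 : ∀ e : κ, (Sᴴ * S) (e, r) (e, r') = ∑ b, (starRingEnd ℂ) (T (b, e) r) * T (b, e) r' := by
      intro e
      rw [Matrix.mul_apply]
      congr 1
    rw [Finset.sum_congr rfl fun e _ => h1 e]
    rw [Matrix.mul_apply, Finset.sum_comm]
    rw [Fintype.sum_prod_type]
    congr 1
  have hA1 := klein_A1 hNpsd hNtr
  rw [hptr1, vnEntropy_diagonal] at hA1
  calc vnEntropy (ptr2 ω) = vnEntropy (S * Sᴴ) := by rw [hSS]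
    _ = vnEntropy (Sᴴ * S) := vnEntropy_mul_conjT S
    _ ≤ (∑ i, Real.negMulLog (hω.1.eigenvalues i)) + Real.log (Fintype.card κ) := hA1
    _ = vnEntropy ω + Real.log (Fintype.card κ) := by rw [vnEntropy, dif_pos hω.1]

lemma real_smul_matrix {ι κ : Type*} (r : ℝ) (M : Matrix ι κ ℂ) :
    r • M = ((r : ℂ)) • M := by
  ext x y
  simp [Complex.real_smul]

lemma posSemidef_weighted_sum {ι : Type*} [Fintype ι] {m : ℕ} (π : Fin m → ℝ)
    (hπ0 : ∀ i, 0 ≤ π i) (ρ : Fin m → Matrix ι ι ℂ) (hρ : ∀ i, (ρ i).PosSemidef) :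
    (∑ i, π i • ρ i).PosSemidef := by
  refine Matrix.posSemidef_iff_dotProduct_mulVec.mpr ⟨?_, ?_⟩
  · unfold Matrix.IsHermitian
    rw [Matrix.conjTranspose_sum]
    refine Finset.sum_congr rfl fun i _ => ?_
    rw [real_smul_matrix, Matrix.conjTranspose_smul, (hρ i).1.eq]
    congr 1
    simp [Complex.star_def, Complex.conj_ofReal]
  · intro x
    have h1 : (∑ i, π i • ρ i) *ᵥ x = ∑ i, (π i • ρ i) *ᵥ x := by
      funext k
      simp only [Matrix.mulVec, dotProduct, Matrix.sum_apply, Finset.sum_apply,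
        Finset.sum_mul]
      rw [Finset.sum_comm]
    rw [h1]
    have h2 : star x ⬝ᵥ (∑ i, (π i • ρ i) *ᵥ x) = ∑ i, star x ⬝ᵥ ((π i • ρ i) *ᵥ x) := by
      simp only [dotProduct, Finset.sum_apply, Finset.mul_sum]
      rw [Finset.sum_comm]
    rw [h2]
    refine Finset.sum_nonneg fun i _ => ?_
    rw [real_smul_matrix, Matrix.smul_mulVec, dotProduct_smul]
    have := (hρ i).dotProduct_mulVec_nonneg x
    have hc : (0:ℂ) ≤ (π i : ℂ) := by
      rw [Complex.le_def]
      simp [hπ0 i]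
    calc (0:ℂ) = (π i : ℂ) * 0 := by ring
      _ ≤ (π i : ℂ) * (star x ⬝ᵥ (ρ i) *ᵥ x) := by
          exact mul_le_mul_of_nonneg_left this hc
      _ = (π i : ℂ) • (star x ⬝ᵥ (ρ i) *ᵥ x) := by rw [smul_eq_mul]

lemma trace_weighted_sum {ι : Type*} [Fintype ι] {m : ℕ} (π : Fin m → ℝ)
    (hπ1 : ∑ i, π i = 1) (ρ : Fin m → Matrix ι ι ℂ) (hρtr : ∀ i, (ρ i).trace = 1) :
    (∑ i, π i • ρ i).trace = 1 := by
  rw [Matrix.trace_sum]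
  have : ∀ i, (π i • ρ i).trace = (π i : ℂ) := by
    intro i
    rw [Matrix.trace_smul, hρtr i]
    simp [Complex.real_smul]
  rw [Finset.sum_congr rfl fun i _ => this i]
  rw [← Complex.ofReal_sum, hπ1, Complex.ofReal_one]


end EDProof

/-- The entropic disturbance of a finite ensemble is bounded by `2 log d_E`. -/
theorem entropic_disturbance_le_two_log_choi_rank
    (dA dB dE : ℕ) (hdA : 0 < dA) (hdB : 0 < dB) (hdE : 0 < dE)
    (V : Matrix (Fin dB × Fin dE) (Fin dA) ℂ) (hV : Vᴴ * V = 1)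
    (m : ℕ) (π : Fin m → ℝ) (hπ0 : ∀ i, 0 ≤ π i) (hπ1 : ∑ i, π i = 1)
    (ρ : Fin m → Matrix (Fin dA) (Fin dA) ℂ)
    (hρ : ∀ i, (ρ i).PosSemidef ∧ (ρ i).trace = 1) :
    finChi π ρ - finChi π (fun i => chanPhi V (ρ i)) ≤ 2 * Real.log dE := by
  classical
  set ρbar : Matrix (Fin dA) (Fin dA) ℂ := ∑ i, π i • ρ i with hρbar
  have hρbarpsd : ρbar.PosSemidef := posSemidef_weighted_sum π hπ0 ρ (fun i => (hρ i).1)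
  have hρbartr : ρbar.trace = 1 := trace_weighted_sum π hπ1 ρ (fun i => (hρ i).2)
  set ω : Fin m → Matrix (Fin dB × Fin dE) (Fin dB × Fin dE) ℂ :=
    fun i => V * ρ i * Vᴴ with hω
  have hωpsd : ∀ i, (ω i).PosSemidef := fun i => (hρ i).1.mul_mul_conjTranspose_same V
  have hωtr : ∀ i, (ω i).trace = 1 := by
    intro i
    rw [hω]
    rw [Matrix.trace_mul_cycle, hV, Matrix.one_mul, (hρ i).2]
  set ωbar : Matrix (Fin dB × Fin dE) (Fin dB × Fin dE) ℂ := V * ρbar * Vᴴ with hωbar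
  have hωbarpsd : ωbar.PosSemidef := hρbarpsd.mul_mul_conjTranspose_same V
  have hωbartr : ωbar.trace = 1 := by
    rw [hωbar, Matrix.trace_mul_cycle, hV, Matrix.one_mul, hρbartr]
  -- linearity: ωbar = ∑ π i • ω i
  have hlin : ωbar = ∑ i, π i • ω i := by
    have h1 : V * ρbar = ∑ i, π i • (V * ρ i) := by
      rw [hρbar, Matrix.mul_sum]
      exact Finset.sum_congr rfl fun i _ => by
        rw [real_smul_matrix, real_smul_matrix, Matrix.mul_smul]
    rw [hωbar, h1, Matrix.sum_mul]
    exact Finset.sum_congr rfl fun i _ => by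
      rw [real_smul_matrix, real_smul_matrix, Matrix.smul_mul]
  -- chanPhi = ptr2 ∘ ω
  have hchan : ∀ i, chanPhi V (ρ i) = ptr2 (ω i) := fun i => rfl
  have havg : (∑ i, π i • chanPhi V (ρ i)) = ptr2 ωbar := by
    rw [hlin]
    ext b b'
    simp only [ptr2, Matrix.of_apply, Matrix.sum_apply, Matrix.smul_apply, chanPhi, ptraceE]
    rw [Finset.sum_comm]
    refine Finset.sum_congr rfl fun i _ => ?_
    rw [Finset.smul_sum]
  -- entropies
  have hiso : ∀ i, vnEntropy (ω i) = vnEntropy (ρ i) :=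
    fun i => vnEntropy_iso V hV (hρ i).1
  have hisobar : vnEntropy ωbar = vnEntropy ρbar := vnEntropy_iso V hV hρbarpsd
  have hA := klein_A hωbarpsd hωbartr
  have hBs : ∀ i, vnEntropy (ptr2 (ω i)) ≤ vnEntropy (ω i) + Real.log dE := by
    intro i
    have := klein_B (hωpsd i) (hωtr i)
    simpa [Fintype.card_fin] using this
  have hcard : Real.log (Fintype.card (Fin dE)) = Real.log dE := by
    simp [Fintype.card_fin]
  rw [hcard] at hA
  -- assemble
  have hsum : ∑ i, π i * vnEntropy (chanPhi V (ρ i))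
      ≤ ∑ i, π i * (vnEntropy (ρ i) + Real.log dE) := by
    refine Finset.sum_le_sum fun i _ => ?_
    have h1 : vnEntropy (chanPhi V (ρ i)) ≤ vnEntropy (ρ i) + Real.log dE := by
      rw [hchan i]
      calc vnEntropy (ptr2 (ω i)) ≤ vnEntropy (ω i) + Real.log dE := hBs i
        _ = vnEntropy (ρ i) + Real.log dE := by rw [hiso i]
    exact mul_le_mul_of_nonneg_left h1 (hπ0 i)
  have hsum' : ∑ i, π i * (vnEntropy (ρ i) + Real.log dE)
      = (∑ i, π i * vnEntropy (ρ i)) + Real.log dE := by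
    have h2 : ∀ i, π i * (vnEntropy (ρ i) + Real.log dE)
        = π i * vnEntropy (ρ i) + π i * Real.log dE := fun i => by ring
    rw [Finset.sum_congr rfl fun i _ => h2 i, Finset.sum_add_distrib, ← Finset.sum_mul, hπ1,
      one_mul]
  unfold finChi
  have e1 : vnEntropy (∑ i, π i • ρ i) = vnEntropy ωbar := by
    rw [← hρbar, ← hisobar]
  have e2 : (∑ i, π i • chanPhi V (ρ i)) = ptr2 ωbar := havg
  rw [e1, e2]
  have hbeta : (∑ i, π i * vnEntropy ((fun j => chanPhi V (ρ j)) i))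
      = ∑ i, π i * vnEntropy (chanPhi V (ρ i)) := rfl
  rw [hbeta]
  linarith [hA, hsum, hsum']
end

section
/- Let d_A, d_B, d_E be positive natural numbers and V an isometry from ℂ^{d_A} to ℂ^{d_B} ⊗ ℂ^{d_E}, with associated channel Φ(ρ) = Tr_E(V ρ Vᴴ). Then the entropic disturbance μ ↦ χ(μ) − χ(Φ(μ)) is a continuous function on the space of Borel probability measures on the set S_{d_A} of states on ℂ^{d_A}, equipped with the topology of weak convergence; here χ(μ) = H(ρ̄(μ)) − ∫ H(ρ) μ(dρ) and χ(Φ(μ)) = H(Φ(ρ̄(μ))) − ∫ H(Φ(ρ)) μ(dρ), with ρ̄(μ) = ∫ ρ μ(dρ). -/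
open MeasureTheory ComplexOrder Matrix

noncomputable section AuxED

open Polynomial in
lemma aux_trace_pow {d : ℕ} {ρ : Matrix (Fin d) (Fin d) ℂ} (h : ρ.IsHermitian) (k : ℕ) :
    Matrix.trace (ρ ^ k) = ((∑ i, h.eigenvalues i ^ k : ℝ) : ℂ) := by
  set U : Matrix (Fin d) (Fin d) ℂ := (h.eigenvectorUnitary : Matrix (Fin d) (Fin d) ℂ) with hUdef
  have hU1 : U * star U = 1 := Matrix.mem_unitaryGroup_iff.mp h.eigenvectorUnitary.2
  have hU2 : star U * U = 1 := Matrix.mem_unitaryGroup_iff'.mp h.eigenvectorUnitary.2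
  set D : Matrix (Fin d) (Fin d) ℂ :=
    Matrix.diagonal (RCLike.ofReal ∘ h.eigenvalues) with hDdef
  have key : ∀ m : ℕ, ρ ^ m = U * D ^ m * star U := by
    intro m; induction m with
    | zero => simpa using hU1.symm
    | succ m ih =>
      calc ρ ^ (m + 1) = ρ ^ m * ρ := pow_succ ρ m
        _ = (U * D ^ m * star U) * (U * D * star U) := by
            rw [ih]; congr 1; exact h.spectral_theorem
        _ = U * D ^ m * ((star U * U) * (D * star U)) := by
            simp only [Matrix.mul_assoc]
        _ = U * D ^ (m + 1) * star U := by
            rw [hU2, one_mul, pow_succ]; simp only [Matrix.mul_assoc]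
  rw [key k, Matrix.trace_mul_cycle, hU2, one_mul, Matrix.diagonal_pow,
    Matrix.trace_diagonal]
  push_cast
  rfl

open Polynomial in
lemma aux_trace_aeval {d : ℕ} {ρ : Matrix (Fin d) (Fin d) ℂ} (h : ρ.IsHermitian) (p : ℝ[X]) :
    Matrix.trace (aeval ρ p) = ((∑ i, p.eval (h.eigenvalues i) : ℝ) : ℂ) := by
  rw [aeval_eq_sum_range, Matrix.trace_sum]
  simp_rw [Matrix.trace_smul, aux_trace_pow h]
  have : ∀ i, p.eval (h.eigenvalues i)
      = ∑ k ∈ Finset.range (p.natDegree + 1), p.coeff k * h.eigenvalues i ^ k := by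
    intro i; rw [eval_eq_sum_range]
  simp_rw [this]
  rw [Finset.sum_comm]
  push_cast
  simp [Finset.mul_sum, Complex.real_smul]

lemma aux_eig_mem {d : ℕ} {ρ : Matrix (Fin d) (Fin d) ℂ} (hρ : ρ ∈ stateSet d) (i : Fin d) :
    hρ.1.1.eigenvalues i ∈ Set.Icc (0 : ℝ) 1 := by
  have hsum : (∑ j, hρ.1.1.eigenvalues j) = 1 := by
    have h1 : ((∑ j, hρ.1.1.eigenvalues j ^ 1 : ℝ) : ℂ) = 1 :=
      (aux_trace_pow hρ.1.1 1).symm.trans (by rw [pow_one, hρ.2])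
    have h2 : ((∑ j, hρ.1.1.eigenvalues j : ℝ) : ℂ) = 1 := by simpa using h1
    exact_mod_cast h2
  refine ⟨hρ.1.eigenvalues_nonneg i, ?_⟩
  calc hρ.1.1.eigenvalues i ≤ ∑ j, hρ.1.1.eigenvalues j :=
        Finset.single_le_sum (fun j _ => hρ.1.eigenvalues_nonneg j) (Finset.mem_univ i)
    _ = 1 := hsum

lemma aux_entropy_eq {d : ℕ} {ρ : Matrix (Fin d) (Fin d) ℂ} (h : ρ.IsHermitian) :
    vnEntropy ρ = ∑ i, Real.negMulLog (h.eigenvalues i) := dif_pos h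

lemma aux_negMulLog_le_one {x : ℝ} (h0 : 0 ≤ x) (h1 : x ≤ 1) : Real.negMulLog x ≤ 1 := by
  rcases eq_or_lt_of_le h0 with h | h
  · simp [Real.negMulLog, ← h]
  · have hlog : Real.log x⁻¹ ≤ x⁻¹ - 1 := Real.log_le_sub_one_of_pos (by positivity)
    have : Real.negMulLog x = x * Real.log x⁻¹ := by
      rw [Real.log_inv, Real.negMulLog]; ring
    rw [this]
    calc x * Real.log x⁻¹ ≤ x * (x⁻¹ - 1) := by
          exact mul_le_mul_of_nonneg_left hlog h0
      _ = 1 - x := by field_simp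
      _ ≤ 1 := by linarith

lemma aux_entropy_bound {d : ℕ} {ρ : Matrix (Fin d) (Fin d) ℂ} (hρ : ρ ∈ stateSet d) :
    ‖vnEntropy ρ‖ ≤ d := by
  rw [aux_entropy_eq hρ.1.1, Real.norm_eq_abs]
  calc |∑ i, Real.negMulLog (hρ.1.1.eigenvalues i)|
      ≤ ∑ i, |Real.negMulLog (hρ.1.1.eigenvalues i)| := Finset.abs_sum_le_sum_abs _ _
    _ ≤ ∑ _i : Fin d, (1 : ℝ) := by
        refine Finset.sum_le_sum fun i _ => ?_
        have hm := aux_eig_mem hρ i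
        rw [abs_of_nonneg (Real.negMulLog_nonneg hm.1 hm.2)]
        exact aux_negMulLog_le_one hm.1 hm.2
    _ = d := by simp

lemma aux_vnEntropy_continuousOn (d : ℕ) : ContinuousOn vnEntropy (stateSet d) := by
  have hex : ∀ n : ℕ, ∃ p : Polynomial ℝ, ∀ x ∈ Set.Icc (0 : ℝ) 1,
      |p.eval x - Real.negMulLog x| < 1 / (n + 1) := fun n =>
    exists_polynomial_near_of_continuousOn 0 1 _
      Real.continuous_negMulLog.continuousOn _ (by positivity)
  choose p hp using hex
  have htu : TendstoUniformlyOn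
      (fun n (M : Matrix (Fin d) (Fin d) ℂ) =>
        (Matrix.trace (Polynomial.aeval M (p n))).re)
      vnEntropy Filter.atTop (stateSet d) := by
    rw [Metric.tendstoUniformlyOn_iff]
    intro ε hε
    obtain ⟨N, hN⟩ := exists_nat_gt ((d : ℝ) / ε)
    filter_upwards [Filter.eventually_ge_atTop N] with n hn ρ hρ
    have h := hρ.1.1
    rw [Real.dist_eq, aux_entropy_eq h, aux_trace_aeval h, Complex.ofReal_re,
      ← Finset.sum_sub_distrib]
    have hterm : ∀ i : Fin d,
        |Real.negMulLog (h.eigenvalues i) - (p n).eval (h.eigenvalues i)| < 1 / (n + 1) := by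
      intro i
      rw [abs_sub_comm]
      exact hp n _ (aux_eig_mem hρ i)
    calc |∑ i, (Real.negMulLog (h.eigenvalues i) - (p n).eval (h.eigenvalues i))|
        ≤ ∑ i, |Real.negMulLog (h.eigenvalues i) - (p n).eval (h.eigenvalues i)| :=
          Finset.abs_sum_le_sum_abs _ _
      _ ≤ ∑ _i : Fin d, 1 / ((n : ℝ) + 1) :=
          Finset.sum_le_sum fun i _ => (hterm i).le
      _ = d / ((n : ℝ) + 1) := by rw [Finset.sum_const]; simp [div_eq_mul_inv]
      _ < ε := by
          rw [div_lt_iff₀ (by positivity)]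
          have hd : (d : ℝ) / ε < N := hN
          have : (d : ℝ) < ε * (N + 1) := by
            rw [div_lt_iff₀ hε] at hd
            nlinarith [hε.le]
          calc (d : ℝ) < ε * (N + 1) := this
            _ ≤ ε * (n + 1) := by
                have : (N : ℝ) ≤ n := by exact_mod_cast hn
                nlinarith [hε.le]
  exact htu.continuousOn (Filter.Eventually.frequently (Filter.Eventually.of_forall fun n =>
    (Complex.continuous_re.comp
      (((p n).continuous_aeval).matrix_trace)).continuousOn))

lemma aux_entry_bound {d : ℕ} {ρ : Matrix (Fin d) (Fin d) ℂ} (hρ : ρ ∈ stateSet d)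
    (i j : Fin d) : ‖ρ i j‖ ≤ 1 := by
  have h := hρ.1.1
  have hsq : ((∑ a, ∑ b, Complex.normSq (ρ a b) : ℝ) : ℂ) = Matrix.trace (ρ ^ 2) := by
    rw [pow_two]
    have : Matrix.trace (ρ * ρ) = ∑ a, ∑ b, ρ a b * ρ b a := by
      simp [Matrix.trace, Matrix.diag, Matrix.mul_apply]
    rw [this]
    push_cast
    refine Finset.sum_congr rfl fun a _ => Finset.sum_congr rfl fun b _ => ?_
    have hsym : ρ b a = (starRingEnd ℂ) (ρ a b) := by rw [← h.apply b a]; rfl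
    rw [hsym, Complex.mul_conj]
  have hsum2 : (∑ a, ∑ b, Complex.normSq (ρ a b)) = ∑ k, hρ.1.1.eigenvalues k ^ 2 := by
    have := hsq.trans (aux_trace_pow hρ.1.1 2)
    exact_mod_cast this
  have hle1 : (∑ k, hρ.1.1.eigenvalues k ^ 2) ≤ 1 := by
    have h1 : (∑ k, hρ.1.1.eigenvalues k) = 1 := by
      have h1' : ((∑ k, hρ.1.1.eigenvalues k ^ 1 : ℝ) : ℂ) = 1 :=
        (aux_trace_pow hρ.1.1 1).symm.trans (by rw [pow_one, hρ.2])
      have h2 : ((∑ k, hρ.1.1.eigenvalues k : ℝ) : ℂ) = 1 := by simpa using h1'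
      exact_mod_cast h2
    calc (∑ k, hρ.1.1.eigenvalues k ^ 2) ≤ ∑ k, hρ.1.1.eigenvalues k := by
          refine Finset.sum_le_sum fun k _ => ?_
          have hm := aux_eig_mem hρ k
          nlinarith [hm.1, hm.2]
      _ = 1 := h1
  have hentry : Complex.normSq (ρ i j) ≤ 1 := by
    calc Complex.normSq (ρ i j)
        ≤ ∑ b, Complex.normSq (ρ i b) :=
          Finset.single_le_sum (fun b _ => Complex.normSq_nonneg _) (Finset.mem_univ j)
      _ ≤ ∑ a, ∑ b, Complex.normSq (ρ a b) :=
          Finset.single_le_sum (f := fun a => ∑ b, Complex.normSq (ρ a b))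
            (fun a _ => Finset.sum_nonneg fun b _ => Complex.normSq_nonneg _)
            (Finset.mem_univ i)
      _ ≤ 1 := by rw [hsum2]; exact hle1
  have : ‖ρ i j‖ ^ 2 ≤ 1 := by
    rw [Complex.sq_norm]
    exact hentry
  exact (pow_le_one_iff_of_nonneg (norm_nonneg _) two_ne_zero).mp this

lemma aux_continuous_entry {d : ℕ} (i j : Fin d) :
    Continuous (fun ρ : stateSet d => ρ.1 i j) :=
  continuous_subtype_val.matrix_elem i j

lemma aux_integrable_entry {d : ℕ} (μ : ProbabilityMeasure (stateSet d)) (i j : Fin d) :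
    Integrable (fun ρ : stateSet d => ρ.1 i j) (μ : Measure (stateSet d)) := by
  refine ⟨(aux_continuous_entry i j).aestronglyMeasurable, ?_⟩
  apply MeasureTheory.HasFiniteIntegral.of_bounded (C := 1)
  filter_upwards with ρ
  exact aux_entry_bound ρ.2 i j

lemma aux_quadform {n : Type*} [Fintype n] (A : Matrix n n ℂ) (x : n → ℂ) :
    dotProduct (star x) (A *ᵥ x)
      = ∑ i, ∑ j, (starRingEnd ℂ) (x i) * A i j * x j := by
  simp [dotProduct, Matrix.mulVec, Finset.mul_sum, mul_assoc]

lemma aux_barycenter_mem {d : ℕ} (μ : ProbabilityMeasure (stateSet d)) :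
    barycenter μ ∈ stateSet d := by
  have hint : ∀ i j, Integrable (fun ρ : stateSet d => ρ.1 i j)
      (μ : Measure (stateSet d)) := aux_integrable_entry μ
  refine ⟨Matrix.posSemidef_iff_dotProduct_mulVec.mpr ⟨?_, ?_⟩, ?_⟩
  · ext i j
    rw [Matrix.conjTranspose_apply]
    show star (∫ ρ : stateSet d, ρ.1 j i ∂(μ : Measure (stateSet d)))
      = ∫ ρ : stateSet d, ρ.1 i j ∂(μ : Measure (stateSet d))
    rw [show (star (∫ ρ : stateSet d, ρ.1 j i ∂(μ : Measure (stateSet d))))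
        = (starRingEnd ℂ) (∫ ρ : stateSet d, ρ.1 j i ∂(μ : Measure (stateSet d))) from rfl,
      ← integral_conj]
    exact integral_congr_ae (Filter.Eventually.of_forall fun ρ => ρ.2.1.1.apply i j)
  · intro x
    have hgint : Integrable (fun ρ : stateSet d => star x ⬝ᵥ (ρ.1 *ᵥ x))
        (μ : Measure (stateSet d)) := by
      simp_rw [aux_quadform]
      refine integrable_finset_sum _ fun i _ => integrable_finset_sum _ fun j _ => ?_
      exact ((hint i j).const_mul _).mul_const _
    have key : star x ⬝ᵥ (barycenter μ *ᵥ x)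
        = ∫ ρ : stateSet d, star x ⬝ᵥ (ρ.1 *ᵥ x) ∂(μ : Measure (stateSet d)) := by
      rw [aux_quadform]
      have : ∀ i j : Fin d, (starRingEnd ℂ) (x i) * (barycenter μ) i j * x j
          = ∫ ρ : stateSet d, (starRingEnd ℂ) (x i) * ρ.1 i j * x j
              ∂(μ : Measure (stateSet d)) := by
        intro i j
        show (starRingEnd ℂ) (x i)
            * (∫ ρ : stateSet d, ρ.1 i j ∂(μ : Measure (stateSet d))) * x j = _
        rw [← integral_const_mul, ← integral_mul_const]
      simp_rw [this]
      calc (∑ i, ∑ j, ∫ ρ : stateSet d, (starRingEnd ℂ) (x i) * ρ.1 i j * x j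
              ∂(μ : Measure (stateSet d)))
          = ∑ i, ∫ ρ : stateSet d, ∑ j, (starRingEnd ℂ) (x i) * ρ.1 i j * x j
              ∂(μ : Measure (stateSet d)) := by
            exact Finset.sum_congr rfl fun i _ =>
              (integral_finset_sum _ fun j _ => ((hint i j).const_mul _).mul_const _).symm
        _ = ∫ ρ : stateSet d, ∑ i, ∑ j, (starRingEnd ℂ) (x i) * ρ.1 i j * x j
              ∂(μ : Measure (stateSet d)) := by
            exact (integral_finset_sum _ fun i _ => integrable_finset_sum _ fun j _ =>
              ((hint i j).const_mul _).mul_const _).symm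
        _ = ∫ ρ : stateSet d, star x ⬝ᵥ (ρ.1 *ᵥ x) ∂(μ : Measure (stateSet d)) := by
            refine integral_congr_ae (Filter.Eventually.of_forall fun ρ => ?_)
            exact (aux_quadform ρ.1 x).symm
    rw [key]
    have hg : ∀ ρ : stateSet d, 0 ≤ star x ⬝ᵥ (ρ.1 *ᵥ x) := fun ρ => ρ.2.1.dotProduct_mulVec_nonneg x
    rw [Complex.le_def]
    constructor
    · have := integral_re (μ := (μ : Measure (stateSet d)))
        (f := fun ρ : stateSet d => star x ⬝ᵥ (ρ.1 *ᵥ x)) hgint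
      simp only [RCLike.re_to_complex] at this
      rw [Complex.zero_re, ← this]
      exact integral_nonneg fun ρ => by
        have := (Complex.le_def.mp (hg ρ)).1
        simpa using this
    · have := integral_im (μ := (μ : Measure (stateSet d)))
        (f := fun ρ : stateSet d => star x ⬝ᵥ (ρ.1 *ᵥ x)) hgint
      simp only [RCLike.im_to_complex] at this
      rw [Complex.zero_im, ← this]
      symm
      calc ∫ ρ : stateSet d, (star x ⬝ᵥ (ρ.1 *ᵥ x)).im ∂(μ : Measure (stateSet d))
          = ∫ _ρ : stateSet d, (0 : ℝ) ∂(μ : Measure (stateSet d)) := by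
            refine integral_congr_ae (Filter.Eventually.of_forall fun ρ => ?_)
            have := (Complex.le_def.mp (hg ρ)).2
            simpa using this.symm
        _ = 0 := by simp
  · show (∑ i, barycenter μ i i) = 1
    calc (∑ i, barycenter μ i i)
        = ∫ ρ : stateSet d, ∑ i, ρ.1 i i ∂(μ : Measure (stateSet d)) :=
          (integral_finset_sum _ fun i _ => hint i i).symm
      _ = ∫ _ρ : stateSet d, (1 : ℂ) ∂(μ : Measure (stateSet d)) := by
          refine integral_congr_ae (Filter.Eventually.of_forall fun ρ => ?_)
          have := ρ.2.2
          simpa [Matrix.trace, Matrix.diag] using this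
      _ = 1 := by simp

lemma aux_continuous_integral_entry {d : ℕ} (i j : Fin d) :
    Continuous fun μ : ProbabilityMeasure (stateSet d) =>
      ∫ ρ : stateSet d, ρ.1 i j ∂(μ : Measure (stateSet d)) := by
  have hre : Continuous fun ρ : stateSet d => (ρ.1 i j).re :=
    Complex.continuous_re.comp (aux_continuous_entry i j)
  have him : Continuous fun ρ : stateSet d => (ρ.1 i j).im :=
    Complex.continuous_im.comp (aux_continuous_entry i j)
  set fre : BoundedContinuousFunction (stateSet d) ℝ :=
    BoundedContinuousFunction.ofNormedAddCommGroup _ hre 1 (fun ρ => by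
      simp only [Real.norm_eq_abs]
      exact le_trans (Complex.abs_re_le_norm _) (aux_entry_bound ρ.2 i j)) with hfre
  set fim : BoundedContinuousFunction (stateSet d) ℝ :=
    BoundedContinuousFunction.ofNormedAddCommGroup _ him 1 (fun ρ => by
      simp only [Real.norm_eq_abs]
      exact le_trans (Complex.abs_im_le_norm _) (aux_entry_bound ρ.2 i j)) with hfim
  have key : ∀ μ : ProbabilityMeasure (stateSet d),
      (∫ ρ : stateSet d, ρ.1 i j ∂(μ : Measure (stateSet d)))
        = ((∫ ρ : stateSet d, fre ρ ∂(μ : Measure (stateSet d)) : ℝ) : ℂ)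
          + ((∫ ρ : stateSet d, fim ρ ∂(μ : Measure (stateSet d)) : ℝ) : ℂ) * Complex.I := by
    intro μ
    have := integral_re_add_im (μ := (μ : Measure (stateSet d)))
      (f := fun ρ : stateSet d => ρ.1 i j) (aux_integrable_entry μ i j)
    simp only [RCLike.re_to_complex, RCLike.im_to_complex, RCLike.I_to_complex] at this
    exact this.symm
  simp_rw [key]
  exact (Complex.continuous_ofReal.comp
      (MeasureTheory.ProbabilityMeasure.continuous_integral_boundedContinuousFunction fre)).add
    ((Complex.continuous_ofReal.comp
      (MeasureTheory.ProbabilityMeasure.continuous_integral_boundedContinuousFunction fim)).mul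
      continuous_const)

lemma aux_continuous_barycenter {d : ℕ} :
    Continuous fun μ : ProbabilityMeasure (stateSet d) => barycenter μ := by
  refine continuous_pi fun i => continuous_pi fun j => ?_
  exact aux_continuous_integral_entry i j

lemma aux_ptraceE_posSemidef {dB dE : ℕ}
    {M : Matrix (Fin dB × Fin dE) (Fin dB × Fin dE) ℂ} (hM : M.PosSemidef) :
    (ptraceE M).PosSemidef := by
  refine Matrix.posSemidef_iff_dotProduct_mulVec.mpr ⟨?_, ?_⟩
  · ext b b'
    rw [Matrix.conjTranspose_apply]
    show star (∑ e, M (b', e) (b, e)) = ∑ e, M (b, e) (b', e)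
    rw [star_sum]
    exact Finset.sum_congr rfl fun e _ => hM.1.apply _ _
  · intro x
    have expand : star x ⬝ᵥ (ptraceE M *ᵥ x)
        = ∑ e, (star (fun p : Fin dB × Fin dE => if p.2 = e then x p.1 else 0) ⬝ᵥ
            (M *ᵥ fun p : Fin dB × Fin dE => if p.2 = e then x p.1 else 0)) := by
      simp_rw [aux_quadform]
      show (∑ b, ∑ b', (starRingEnd ℂ) (x b) * (∑ e, M (b, e) (b', e)) * x b') = _
      simp only [Fintype.sum_prod_type, apply_ite (starRingEnd ℂ), map_zero, ite_mul,
        mul_ite, zero_mul, mul_zero, Finset.sum_ite_eq', Finset.mem_univ, if_true,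
        Finset.mul_sum, Finset.sum_mul, Finset.sum_ite_irrel, Finset.sum_const_zero]
      conv_rhs => rw [Finset.sum_comm]
      refine Finset.sum_congr rfl fun b _ => Finset.sum_comm
    rw [expand]
    exact Finset.sum_nonneg fun e _ => hM.dotProduct_mulVec_nonneg _

lemma aux_trace_ptraceE {dB dE : ℕ} (M : Matrix (Fin dB × Fin dE) (Fin dB × Fin dE) ℂ) :
    (ptraceE M).trace = M.trace := by
  simp [Matrix.trace, ptraceE, Matrix.diag, Fintype.sum_prod_type]

lemma aux_chanPhi_mem {dA dB dE : ℕ} (V : Matrix (Fin dB × Fin dE) (Fin dA) ℂ)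
    (hV : Vᴴ * V = 1) {ρ : Matrix (Fin dA) (Fin dA) ℂ} (hρ : ρ ∈ stateSet dA) :
    chanPhi V ρ ∈ stateSet dB := by
  refine ⟨aux_ptraceE_posSemidef (hρ.1.mul_mul_conjTranspose_same V), ?_⟩
  show (ptraceE (V * ρ * Vᴴ)).trace = 1
  rw [aux_trace_ptraceE, Matrix.trace_mul_cycle, hV, one_mul, hρ.2]

lemma aux_chanPhi_continuous {dA dB dE : ℕ} (V : Matrix (Fin dB × Fin dE) (Fin dA) ℂ) :
    Continuous (chanPhi (dE := dE) V) := by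
  have h1 : Continuous fun ρ : Matrix (Fin dA) (Fin dA) ℂ => V * ρ * Vᴴ :=
    (continuous_const.matrix_mul continuous_id).matrix_mul continuous_const
  refine continuous_pi fun b => continuous_pi fun b' => ?_
  show Continuous fun ρ : Matrix (Fin dA) (Fin dA) ℂ => ∑ e, (V * ρ * Vᴴ) (b, e) (b', e)
  exact continuous_finset_sum _ fun e _ => h1.matrix_elem _ _

end AuxED

/-- For a channel with finite-dimensional input/output, the entropic disturbance
`μ ↦ χ(μ) − χ(Φ(μ))` is continuous in the topology of weak convergence. -/
theorem continuous_entropic_disturbance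
    (dA dB dE : ℕ) (hdA : 0 < dA) (hdB : 0 < dB) (hdE : 0 < dE)
    (V : Matrix (Fin dB × Fin dE) (Fin dA) ℂ) (hV : Vᴴ * V = 1) :
    Continuous (fun μ : ProbabilityMeasure (stateSet dA) =>
      gChi μ - gChiOut (chanPhi V) μ) := by
  simp only [gChi, gChiOut]
  have hbc : Continuous fun μ : ProbabilityMeasure (stateSet dA) => barycenter μ :=
    aux_continuous_barycenter
  have hvA := aux_vnEntropy_continuousOn dA
  have hvB := aux_vnEntropy_continuousOn dB
  have h1 : Continuous fun μ : ProbabilityMeasure (stateSet dA) => vnEntropy (barycenter μ) :=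
    hvA.comp_continuous hbc fun μ => aux_barycenter_mem μ
  have h3 : Continuous fun μ : ProbabilityMeasure (stateSet dA) =>
      vnEntropy (chanPhi V (barycenter μ)) :=
    hvB.comp_continuous ((aux_chanPhi_continuous V).comp hbc)
      fun μ => aux_chanPhi_mem V hV (aux_barycenter_mem μ)
  have hc2 : Continuous fun ρ : stateSet dA => vnEntropy ρ.1 := hvA.restrict
  have hc4 : Continuous fun ρ : stateSet dA => vnEntropy (chanPhi V ρ.1) :=
    (hvB.comp ((aux_chanPhi_continuous V).continuousOn)
      (fun ρ hρ => aux_chanPhi_mem V hV hρ)).restrict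
  set f2 : BoundedContinuousFunction (stateSet dA) ℝ :=
    BoundedContinuousFunction.ofNormedAddCommGroup
      (fun ρ : stateSet dA => vnEntropy ρ.1) hc2 dA
      (fun ρ => aux_entropy_bound ρ.2) with hf2
  set f4 : BoundedContinuousFunction (stateSet dA) ℝ :=
    BoundedContinuousFunction.ofNormedAddCommGroup
      (fun ρ : stateSet dA => vnEntropy (chanPhi V ρ.1)) hc4 dB
      (fun ρ => aux_entropy_bound (aux_chanPhi_mem V hV ρ.2)) with hf4
  have h2 : Continuous fun μ : ProbabilityMeasure (stateSet dA) =>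
      ∫ ρ : stateSet dA, vnEntropy ρ.1 ∂(μ : Measure (stateSet dA)) :=
    MeasureTheory.ProbabilityMeasure.continuous_integral_boundedContinuousFunction f2
  have h4 : Continuous fun μ : ProbabilityMeasure (stateSet dA) =>
      ∫ ρ : stateSet dA, vnEntropy (chanPhi V ρ.1) ∂(μ : Measure (stateSet dA)) :=
    MeasureTheory.ProbabilityMeasure.continuous_integral_boundedContinuousFunction f4
  exact (h1.sub h2).sub (h3.sub h4)
end

section
/- Let d_A, d_B, d_E be positive natural numbers and V an isometry from ℂ^{d_A} to ℂ^{d_B} ⊗ ℂ^{d_E}, with associated channel Φ(ρ) = Tr_E(V ρ Vᴴ). Then the output χ-quantity μ ↦ χ(Φ(μ)) = H(Φ(ρ̄(μ))) − ∫ H(Φ(ρ)) μ(dρ) is a continuous function on the space of Borel probability measures on the set S_{d_A} of states on ℂ^{d_A}, equipped with the topology of weak convergence, where ρ̄(μ) = ∫ ρ μ(dρ). -/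
open MeasureTheory ComplexOrder Matrix

noncomputable section AuxChi

open Polynomial MeasureTheory Matrix ComplexOrder

namespace AuxChi

variable {n d dA dB dE : ℕ}

/-! ### Basic facts about states -/

lemma entry_eq_inner {ρ : Matrix (Fin n) (Fin n) ℂ} (h : ρ.PosSemidef) :
    ∃ S : Fin n → EuclideanSpace ℂ (Fin n), ∀ i j, ρ i j = inner ℂ (S i) (S j) := by
  obtain ⟨B, rfl⟩ : ∃ B : Matrix (Fin n) (Fin n) ℂ, ρ = Bᴴ * B := by
    open scoped MatrixOrder in
    exact CStarAlgebra.nonneg_iff_eq_star_mul_self.mp h.nonneg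
  refine ⟨fun i => (WithLp.toLp 2 (fun k => B k i) : EuclideanSpace ℂ (Fin n)), fun i j => ?_⟩
  simp [Matrix.mul_apply, Matrix.conjTranspose_apply, PiLp.inner_apply, RCLike.inner_apply,
    mul_comm]

lemma stateSet_entry_norm_le {ρ : Matrix (Fin n) (Fin n) ℂ} (h : ρ ∈ stateSet n)
    (i j : Fin n) : ‖ρ i j‖ ≤ 1 := by
  obtain ⟨S, hS⟩ := entry_eq_inner h.1
  have htr : (∑ k, (‖S k‖ ^ 2 : ℝ)) = 1 := by
    have : ρ.trace = ∑ k, ((‖S k‖ ^ 2 : ℝ) : ℂ) := by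
      simp only [Matrix.trace, Matrix.diag]
      refine Finset.sum_congr rfl fun k _ => ?_
      rw [hS k k, inner_self_eq_norm_sq_to_K]
      norm_cast
    rw [h.2] at this
    exact_mod_cast this.symm
  have hk : ∀ k, ‖S k‖ ≤ 1 := by
    intro k
    have h1 : (‖S k‖ ^ 2 : ℝ) ≤ 1 := by
      rw [← htr]
      exact Finset.single_le_sum (f := fun k => (‖S k‖ ^ 2 : ℝ))
        (fun m _ => sq_nonneg _) (Finset.mem_univ k)
    nlinarith [norm_nonneg (S k)]
  calc ‖ρ i j‖ = ‖(inner ℂ (S i) (S j) : ℂ)‖ := by rw [hS]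
    _ ≤ ‖S i‖ * ‖S j‖ := norm_inner_le_norm _ _
    _ ≤ 1 * 1 := mul_le_mul (hk i) (hk j) (norm_nonneg _) zero_le_one
    _ = 1 := mul_one 1

lemma continuous_entry (i j : Fin n) :
    Continuous fun M : Matrix (Fin n) (Fin n) ℂ => M i j :=
  (continuous_apply j).comp (continuous_apply i)

lemma continuous_trace' :
    Continuous fun M : Matrix (Fin n) (Fin n) ℂ => M.trace :=
  continuous_finset_sum _ fun i _ => continuous_entry i i

lemma isClosed_nonnegC : IsClosed {z : ℂ | 0 ≤ z} := by
  have : {z : ℂ | 0 ≤ z} = {z : ℂ | 0 ≤ z.re} ∩ {z : ℂ | z.im = 0} := by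
    ext z
    simp only [Set.mem_setOf_eq, Set.mem_inter_iff, Complex.le_def]
    simp [eq_comm]
  rw [this]
  exact (isClosed_le continuous_const Complex.continuous_re).inter
    (isClosed_eq Complex.continuous_im continuous_const)

lemma continuous_quadform (x : Fin n → ℂ) :
    Continuous fun M : Matrix (Fin n) (Fin n) ℂ => star x ⬝ᵥ M.mulVec x := by
  simp only [dotProduct, Matrix.mulVec]
  refine continuous_finset_sum _ fun i _ => Continuous.mul continuous_const ?_
  exact continuous_finset_sum _ fun j _ => ((continuous_entry i j).mul continuous_const)

lemma isClosed_stateSet (n : ℕ) : IsClosed (stateSet n) := by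
  have h1 : IsClosed {M : Matrix (Fin n) (Fin n) ℂ | M.IsHermitian} := by
    have hchar : {M : Matrix (Fin n) (Fin n) ℂ | M.IsHermitian} =
        ⋂ i, ⋂ j, {M : Matrix (Fin n) (Fin n) ℂ | M j i = (starRingEnd ℂ) (M i j)} := by
      ext M
      simp only [Set.mem_setOf_eq, Set.mem_iInter]
      constructor
      · intro hM i j
        have h := congrFun (congrFun hM j) i
        rw [Matrix.conjTranspose_apply] at h
        exact h.symm
      · intro hM
        ext i j
        rw [Matrix.conjTranspose_apply, hM i j]
        simp
    rw [hchar]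
    refine isClosed_iInter fun i => isClosed_iInter fun j => ?_
    exact isClosed_eq (continuous_entry j i) (Complex.continuous_conj.comp (continuous_entry i j))
  have h2 : IsClosed {M : Matrix (Fin n) (Fin n) ℂ |
      ∀ x : Fin n → ℂ, 0 ≤ star x ⬝ᵥ M.mulVec x} := by
    have hchar : {M : Matrix (Fin n) (Fin n) ℂ | ∀ x : Fin n → ℂ, 0 ≤ star x ⬝ᵥ M.mulVec x} =
        ⋂ x : Fin n → ℂ, {M : Matrix (Fin n) (Fin n) ℂ | 0 ≤ star x ⬝ᵥ M.mulVec x} := by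
      ext M; simp only [Set.mem_setOf_eq, Set.mem_iInter]
    rw [hchar]
    exact isClosed_iInter fun x => isClosed_nonnegC.preimage (continuous_quadform x)
  have h3 : IsClosed {M : Matrix (Fin n) (Fin n) ℂ | M.trace = 1} :=
    isClosed_eq continuous_trace' continuous_const
  have hset : stateSet n =
      ({M | M.IsHermitian} ∩ {M | ∀ x : Fin n → ℂ, 0 ≤ star x ⬝ᵥ M.mulVec x})
      ∩ {M | M.trace = 1} := by
      ext M
      simp only [stateSet, Set.mem_setOf_eq, Set.mem_inter_iff,
        Matrix.posSemidef_iff_dotProduct_mulVec]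
  rw [hset]
  exact (h1.inter h2).inter h3

lemma isCompact_stateSet (n : ℕ) : IsCompact (stateSet n) := by
  have hK : IsCompact {M : Matrix (Fin n) (Fin n) ℂ | ∀ i j, ‖M i j‖ ≤ 1} := by
    have hchar : {M : Matrix (Fin n) (Fin n) ℂ | ∀ i j, ‖M i j‖ ≤ 1} =
        Set.pi Set.univ fun _ : Fin n => Set.pi Set.univ
          fun _ : Fin n => Metric.closedBall (0 : ℂ) 1 := by
      ext M
      constructor
      · intro h i _ j _
        simpa [dist_zero_right] using h i j
      · intro h i j
        simpa [dist_zero_right] using h i (Set.mem_univ i) j (Set.mem_univ j)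
    rw [hchar]
    exact isCompact_univ_pi fun i => isCompact_univ_pi fun j =>
      isCompact_closedBall _ _
  exact hK.of_isClosed_subset (isClosed_stateSet n)
    (fun M hM i j => stateSet_entry_norm_le hM i j)

instance (n : ℕ) : CompactSpace (stateSet n) :=
  isCompact_iff_compactSpace.mp (isCompact_stateSet n)

/-! ### Partial trace and the channel -/

lemma ptraceE_isHermitian {M : Matrix (Fin dB × Fin dE) (Fin dB × Fin dE) ℂ}
    (hM : M.IsHermitian) : (ptraceE M).IsHermitian := by
  ext b b'
  simp only [Matrix.conjTranspose_apply, ptraceE, Matrix.of_apply, star_sum]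
  refine Finset.sum_congr rfl fun e _ => ?_
  have h := congrFun (congrFun hM (b, e)) (b', e)
  rw [Matrix.conjTranspose_apply] at h
  exact h

lemma ptraceE_posSemidef {M : Matrix (Fin dB × Fin dE) (Fin dB × Fin dE) ℂ}
    (hM : M.PosSemidef) : (ptraceE M).PosSemidef := by
  refine Matrix.PosSemidef.of_dotProduct_mulVec_nonneg (ptraceE_isHermitian hM.1) fun y => ?_
  have key : star y ⬝ᵥ (ptraceE M).mulVec y =
      ∑ e : Fin dE, star (fun p : Fin dB × Fin dE => if p.2 = e then y p.1 else 0) ⬝ᵥ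
        M.mulVec (fun p : Fin dB × Fin dE => if p.2 = e then y p.1 else 0) := by
    have lhs : star y ⬝ᵥ (ptraceE M).mulVec y =
        ∑ e : Fin dE, ∑ b : Fin dB, ∑ b' : Fin dB,
          (starRingEnd ℂ) (y b) * M (b, e) (b', e) * y b' := by
      simp only [dotProduct, Matrix.mulVec, ptraceE, Matrix.of_apply, Pi.star_apply,
        Complex.star_def, Finset.mul_sum, Finset.sum_mul]
      trans ∑ b : Fin dB, ∑ e : Fin dE, ∑ b' : Fin dB,
          (starRingEnd ℂ) (y b) * (M (b, e) (b', e) * y b')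
      · exact Finset.sum_congr rfl fun b _ => Finset.sum_comm
      · rw [Finset.sum_comm]
        exact Finset.sum_congr rfl fun e _ => Finset.sum_congr rfl fun b _ =>
          Finset.sum_congr rfl fun b' _ => (mul_assoc _ _ _).symm
    have rhs : ∀ e : Fin dE,
        star (fun p : Fin dB × Fin dE => if p.2 = e then y p.1 else 0) ⬝ᵥ
          M.mulVec (fun p : Fin dB × Fin dE => if p.2 = e then y p.1 else 0) =
        ∑ b : Fin dB, ∑ b' : Fin dB,
          (starRingEnd ℂ) (y b) * M (b, e) (b', e) * y b' := by
      intro e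
      simp only [dotProduct, Matrix.mulVec, Pi.star_apply, Complex.star_def,
        Fintype.sum_prod_type, apply_ite, map_zero, ite_mul, zero_mul, mul_ite, mul_zero,
        Finset.sum_ite_eq', Finset.mem_univ, if_true, Finset.mul_sum]
      simp only [Finset.sum_ite_irrel, Finset.sum_const_zero, Finset.sum_ite_eq',
        Finset.mem_univ, if_true]
      exact Finset.sum_congr rfl fun b _ => Finset.sum_congr rfl fun b' _ =>
        (mul_assoc _ _ _).symm
    rw [lhs]
    exact Finset.sum_congr rfl fun e _ => (rhs e).symm
  rw [key]
  exact Finset.sum_nonneg fun e _ => hM.dotProduct_mulVec_nonneg _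

lemma ptraceE_trace (M : Matrix (Fin dB × Fin dE) (Fin dB × Fin dE) ℂ) :
    (ptraceE M).trace = M.trace := by
  simp [Matrix.trace, Matrix.diag, ptraceE, Fintype.sum_prod_type]

lemma chanPhi_mem (V : Matrix (Fin dB × Fin dE) (Fin dA) ℂ) (hV : Vᴴ * V = 1)
    {ρ : Matrix (Fin dA) (Fin dA) ℂ} (hρ : ρ ∈ stateSet dA) :
    chanPhi V ρ ∈ stateSet dB := by
  refine ⟨ptraceE_posSemidef (hρ.1.mul_mul_conjTranspose_same V), ?_⟩
  rw [chanPhi, ptraceE_trace, Matrix.trace_mul_cycle, hV, Matrix.one_mul, hρ.2]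

lemma continuous_chanPhi (V : Matrix (Fin dB × Fin dE) (Fin dA) ℂ) :
    Continuous (chanPhi V) := by
  have h1 : Continuous fun ρ : Matrix (Fin dA) (Fin dA) ℂ => V * ρ * Vᴴ :=
    (continuous_const.matrix_mul continuous_id).matrix_mul continuous_const
  have h2 : Continuous fun M : Matrix (Fin dB × Fin dE) (Fin dB × Fin dE) ℂ => ptraceE M := by
    refine continuous_matrix fun b b' => ?_
    show Continuous fun M : Matrix (Fin dB × Fin dE) (Fin dB × Fin dE) ℂ =>
      ∑ e, M (b, e) (b', e)
    exact continuous_finset_sum _ fun e _ =>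
      (continuous_apply (b', e)).comp (continuous_apply (b, e))
  exact h2.comp h1

/-! ### Spectral facts -/

lemma pow_conj_unitary (u D : Matrix (Fin d) (Fin d) ℂ) (hu : star u * u = 1)
    (hu' : u * star u = 1) (k : ℕ) : (u * D * star u) ^ k = u * D ^ k * star u := by
  induction k with
  | zero => simp [hu']
  | succ k ih =>
      rw [pow_succ, ih, pow_succ]
      calc u * D ^ k * star u * (u * D * star u)
          = u * D ^ k * (star u * u) * (D * star u) := by
            simp only [Matrix.mul_assoc]
        _ = u * (D ^ k * D) * star u := by
            rw [hu, Matrix.mul_one]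
            simp only [Matrix.mul_assoc]

lemma aeval_conj_unitary (u D : Matrix (Fin d) (Fin d) ℂ)
    (hu : star u * u = 1) (hu' : u * star u = 1) (p : ℝ[X]) :
    Polynomial.aeval (u * D * star u) p = u * Polynomial.aeval D p * star u := by
  induction p using Polynomial.induction_on' with
  | add p q hp hq => rw [map_add, map_add, hp, hq, Matrix.mul_add, Matrix.add_mul]
  | monomial k a =>
      rw [Polynomial.aeval_monomial, Polynomial.aeval_monomial,
        pow_conj_unitary u D hu hu' k, Algebra.algebraMap_eq_smul_one]
      simp only [smul_mul_assoc, one_mul, mul_smul_comm]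

lemma aeval_diagonal (v : Fin d → ℂ) (p : ℝ[X]) :
    Polynomial.aeval (Matrix.diagonal v) p
      = Matrix.diagonal fun i => Polynomial.aeval (v i) p := by
  have h1 : Matrix.diagonal v = Matrix.diagonalAlgHom (n := Fin d) ℝ v := rfl
  have h2 : (Polynomial.aeval v p : Fin d → ℂ) = fun i => Polynomial.aeval (v i) p := by
    funext i
    exact (Polynomial.aeval_algHom_apply (Pi.evalAlgHom ℝ (fun _ : Fin d => ℂ) i) v p).symm
  rw [h1, Polynomial.aeval_algHom_apply, Matrix.diagonalAlgHom_apply, h2]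

lemma trace_aeval {σ : Matrix (Fin d) (Fin d) ℂ} (hσ : σ.IsHermitian) (p : ℝ[X]) :
    (Polynomial.aeval σ p).trace = ((∑ i, p.eval (hσ.eigenvalues i) : ℝ) : ℂ) := by
  set u : Matrix (Fin d) (Fin d) ℂ := (hσ.eigenvectorUnitary : Matrix (Fin d) (Fin d) ℂ)
    with hu_def
  have hu : star u * u = 1 :=
    Matrix.mem_unitaryGroup_iff'.mp (SetLike.coe_mem hσ.eigenvectorUnitary)
  have hu' : u * star u = 1 :=
    Matrix.mem_unitaryGroup_iff.mp (SetLike.coe_mem hσ.eigenvectorUnitary)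
  conv_lhs => rw [hσ.spectral_theorem, Unitary.conjStarAlgAut_apply]
  rw [aeval_conj_unitary u _ hu hu' p, Matrix.trace_mul_cycle, hu,
    Matrix.one_mul, aeval_diagonal, Matrix.trace_diagonal, Complex.ofReal_sum]
  refine Finset.sum_congr rfl fun i _ => ?_
  have h := Polynomial.aeval_algebraMap_apply_eq_algebraMap_eval (A := ℂ)
    (hσ.eigenvalues i) p
  simpa [Polynomial.coe_aeval_eq_eval] using h

lemma trace_eq_sum_eigenvalues {σ : Matrix (Fin d) (Fin d) ℂ} (hσ : σ.IsHermitian) :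
    σ.trace = ((∑ i, hσ.eigenvalues i : ℝ) : ℂ) := by
  simpa using trace_aeval hσ Polynomial.X

lemma eigenvalues_mem_Icc {σ : Matrix (Fin d) (Fin d) ℂ} (hσ : σ ∈ stateSet d) (i : Fin d) :
    hσ.1.1.eigenvalues i ∈ Set.Icc (0 : ℝ) 1 := by
  have hsum : (∑ j, hσ.1.1.eigenvalues j) = 1 := by
    have h := trace_eq_sum_eigenvalues hσ.1.1
    exact_mod_cast h.symm.trans hσ.2
  refine ⟨hσ.1.eigenvalues_nonneg i, ?_⟩
  calc hσ.1.1.eigenvalues i ≤ ∑ j, hσ.1.1.eigenvalues j :=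
        Finset.single_le_sum (fun j _ => hσ.1.eigenvalues_nonneg j) (Finset.mem_univ i)
    _ = 1 := hsum

lemma vnEntropy_state {σ : Matrix (Fin d) (Fin d) ℂ} (hσ : σ ∈ stateSet d) :
    vnEntropy σ = ∑ i, Real.negMulLog (hσ.1.1.eigenvalues i) := by
  rw [vnEntropy, dif_pos hσ.1.1]

/-! ### Continuity of the entropy on states -/

lemma continuousOn_vnEntropy (d : ℕ) :
    ContinuousOn (vnEntropy : Matrix (Fin d) (Fin d) ℂ → ℝ) (stateSet d) := by
  have happrox : ∀ k : ℕ, ∃ p : ℝ[X], ∀ x ∈ Set.Icc (0 : ℝ) 1,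
      |p.eval x - Real.negMulLog x| < 1 / (k + 1) := fun k =>
    exists_polynomial_near_of_continuousOn 0 1 Real.negMulLog
      Real.continuous_negMulLog.continuousOn _ (by positivity)
  choose p hp using happrox
  have key : TendstoUniformlyOn
      (fun (k : ℕ) (σ : Matrix (Fin d) (Fin d) ℂ) => ((Polynomial.aeval σ (p k)).trace).re)
      vnEntropy Filter.atTop (stateSet d) := by
    rw [Metric.tendstoUniformlyOn_iff]
    intro ε hε
    obtain ⟨K, hK⟩ := exists_nat_gt ((d : ℝ) / ε)
    refine Filter.eventually_atTop.mpr ⟨K, fun k hk σ hσ => ?_⟩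
    rw [Real.dist_eq, vnEntropy_state hσ, trace_aeval hσ.1.1 (p k), Complex.ofReal_re,
      ← Finset.sum_sub_distrib]
    have h1 : |∑ i, (Real.negMulLog (hσ.1.1.eigenvalues i) - (p k).eval (hσ.1.1.eigenvalues i))|
        ≤ ∑ i, |Real.negMulLog (hσ.1.1.eigenvalues i) - (p k).eval (hσ.1.1.eigenvalues i)| :=
      Finset.abs_sum_le_sum_abs _ _
    have h2 : ∑ i, |Real.negMulLog (hσ.1.1.eigenvalues i) - (p k).eval (hσ.1.1.eigenvalues i)|
        ≤ (d : ℝ) * (1 / ((k : ℝ) + 1)) := by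
      have := Finset.sum_le_card_nsmul Finset.univ
        (fun i => |Real.negMulLog (hσ.1.1.eigenvalues i) - (p k).eval (hσ.1.1.eigenvalues i)|)
        (1 / ((k : ℝ) + 1))
        (fun i _ => by
          have hlt := hp k _ (eigenvalues_mem_Icc hσ i)
          rw [abs_sub_comm] at hlt
          exact le_of_lt hlt)
      simpa [nsmul_eq_mul] using this
    have h3 : (d : ℝ) * (1 / ((k : ℝ) + 1)) < ε := by
      have hkk : (K : ℝ) ≤ (k : ℝ) := Nat.cast_le.mpr hk
      have hd : (d : ℝ) < ε * ((k : ℝ) + 1) := by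
        have h4 := (div_lt_iff₀ hε).mp hK
        nlinarith
      rw [mul_one_div, div_lt_iff₀ (by positivity)]
      linarith
    calc |∑ i, (Real.negMulLog (hσ.1.1.eigenvalues i) - (p k).eval (hσ.1.1.eigenvalues i))|
        ≤ (d : ℝ) * (1 / ((k : ℝ) + 1)) := le_trans h1 h2
      _ < ε := h3
  refine key.continuousOn (Filter.Eventually.of_forall fun k => ?_).frequently
  exact (Complex.continuous_re.comp
    (continuous_trace'.comp ((p k).continuous_aeval))).continuousOn

/-! ### Barycenter -/

lemma integrableC (μ : ProbabilityMeasure (stateSet n)) {f : stateSet n → ℂ}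
    (hf : Continuous f) : Integrable f (μ : Measure (stateSet n)) :=
  (BoundedContinuousFunction.mkOfCompact ⟨f, hf⟩).integrable _

lemma continuous_entry_sub (i j : Fin n) :
    Continuous fun ρ : stateSet n => ρ.1 i j :=
  (continuous_entry i j).comp continuous_subtype_val

lemma barycenter_mem (μ : ProbabilityMeasure (stateSet n)) : barycenter μ ∈ stateSet n := by
  refine ⟨Matrix.PosSemidef.of_dotProduct_mulVec_nonneg ?_ ?_, ?_⟩
  · ext i j
    rw [Matrix.conjTranspose_apply, barycenter, Matrix.of_apply, Matrix.of_apply]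
    rw [show (star (∫ ρ : stateSet n, ρ.1 j i ∂(μ : Measure (stateSet n))) : ℂ)
        = (starRingEnd ℂ) (∫ ρ : stateSet n, ρ.1 j i ∂(μ : Measure (stateSet n))) from rfl]
    rw [← integral_conj]
    refine integral_congr_ae (Filter.Eventually.of_forall fun ρ => ?_)
    have h := congrFun (congrFun ρ.2.1.1 i) j
    rw [Matrix.conjTranspose_apply] at h
    exact h
  · intro x
    have key : star x ⬝ᵥ (barycenter μ).mulVec x =
        ∫ ρ : stateSet n, star x ⬝ᵥ (ρ.1).mulVec x ∂(μ : Measure (stateSet n)) := by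
      simp only [dotProduct, Matrix.mulVec, barycenter, Matrix.of_apply, Pi.star_apply]
      have hstep : ∀ i : Fin n, star (x i) * ∑ j, (∫ ρ : stateSet n, ρ.1 i j
          ∂(μ : Measure (stateSet n))) * x j
          = ∫ ρ : stateSet n, star (x i) * ∑ j, ρ.1 i j * x j ∂(μ : Measure (stateSet n)) := by
        intro i
        rw [show ∑ j, (∫ ρ : stateSet n, ρ.1 i j ∂(μ : Measure (stateSet n))) * x j
            = ∑ j, ∫ ρ : stateSet n, ρ.1 i j * x j ∂(μ : Measure (stateSet n)) from
          Finset.sum_congr rfl fun j _ => (integral_mul_const _ _).symm]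
        rw [← integral_finset_sum _ fun j _ =>
          (integrableC μ (continuous_entry_sub i j)).mul_const (x j)]
        exact (integral_const_mul _ _).symm
      rw [show ∑ i, star (x i) * ∑ j, (∫ ρ : stateSet n, ρ.1 i j
          ∂(μ : Measure (stateSet n))) * x j
          = ∑ i, ∫ ρ : stateSet n, star (x i) * ∑ j, ρ.1 i j * x j
            ∂(μ : Measure (stateSet n)) from Finset.sum_congr rfl fun i _ => hstep i]
      rw [← integral_finset_sum]
      intro i _
      exact ((integrableC μ (continuous_finset_sum _ fun j _ =>
        (continuous_entry_sub i j).mul continuous_const))).const_mul _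
    rw [key]
    have hint : Integrable (fun ρ : stateSet n => star x ⬝ᵥ (ρ.1).mulVec x)
        (μ : Measure (stateSet n)) :=
      integrableC μ ((continuous_quadform x).comp continuous_subtype_val)
    have hpt : ∀ ρ : stateSet n, 0 ≤ star x ⬝ᵥ (ρ.1).mulVec x := fun ρ => ρ.2.1.dotProduct_mulVec_nonneg x
    rw [Complex.le_def]
    have hre := integral_re hint
    have him := integral_im hint
    simp only [RCLike.re_to_complex, RCLike.im_to_complex] at hre him
    constructor
    · rw [Complex.zero_re, ← hre]
      exact integral_nonneg fun ρ => (Complex.le_def.mp (hpt ρ)).1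
    · rw [Complex.zero_im, ← him]
      have hz : ∀ ρ : stateSet n, (star x ⬝ᵥ (ρ.1).mulVec x).im = 0 := fun ρ =>
        ((Complex.le_def.mp (hpt ρ)).2).symm
      rw [show (0 : ℝ) = ∫ _ρ : stateSet n, (0 : ℝ) ∂(μ : Measure (stateSet n)) by simp]
      exact (integral_congr_ae (Filter.Eventually.of_forall fun ρ => hz ρ)).symm
  · have htr : (barycenter μ).trace
        = ∫ ρ : stateSet n, (ρ.1).trace ∂(μ : Measure (stateSet n)) := by
      rw [show (∫ ρ : stateSet n, (ρ.1).trace ∂(μ : Measure (stateSet n)))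
          = ∫ ρ : stateSet n, ∑ i, ρ.1 i i ∂(μ : Measure (stateSet n)) from rfl]
      rw [integral_finset_sum _ fun i _ => integrableC μ (continuous_entry_sub i i)]
      rfl
    rw [htr]
    have : ∀ ρ : stateSet n, (ρ.1).trace = (1 : ℂ) := fun ρ => ρ.2.2
    rw [integral_congr_ae (Filter.Eventually.of_forall this)]
    simp

lemma continuous_barycenter :
    Continuous fun μ : ProbabilityMeasure (stateSet n) => barycenter μ := by
  refine continuous_matrix fun i j => ?_
  show Continuous fun μ : ProbabilityMeasure (stateSet n) =>
    ∫ ρ : stateSet n, ρ.1 i j ∂(μ : Measure (stateSet n))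
  have hre : Continuous fun μ : ProbabilityMeasure (stateSet n) =>
      ∫ ρ : stateSet n, (ρ.1 i j).re ∂(μ : Measure (stateSet n)) := by
    have h := MeasureTheory.ProbabilityMeasure.continuous_integral_boundedContinuousFunction
      (X := stateSet n) (BoundedContinuousFunction.mkOfCompact
        ⟨fun ρ : stateSet n => (ρ.1 i j).re,
          Complex.continuous_re.comp (continuous_entry_sub i j)⟩)
    simpa using h
  have him : Continuous fun μ : ProbabilityMeasure (stateSet n) =>
      ∫ ρ : stateSet n, (ρ.1 i j).im ∂(μ : Measure (stateSet n)) := by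
    have h := MeasureTheory.ProbabilityMeasure.continuous_integral_boundedContinuousFunction
      (X := stateSet n) (BoundedContinuousFunction.mkOfCompact
        ⟨fun ρ : stateSet n => (ρ.1 i j).im,
          Complex.continuous_im.comp (continuous_entry_sub i j)⟩)
    simpa using h
  have heq : (fun μ : ProbabilityMeasure (stateSet n) =>
      ∫ ρ : stateSet n, ρ.1 i j ∂(μ : Measure (stateSet n)))
      = fun μ : ProbabilityMeasure (stateSet n) =>
        ((∫ ρ : stateSet n, (ρ.1 i j).re ∂(μ : Measure (stateSet n)) : ℝ) : ℂ)
          + ((∫ ρ : stateSet n, (ρ.1 i j).im ∂(μ : Measure (stateSet n)) : ℝ) : ℂ)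
            * Complex.I := by
    funext μ
    have hint := integrableC μ (continuous_entry_sub (n := n) i j)
    have hre2 := integral_re hint
    have him2 := integral_im hint
    simp only [RCLike.re_to_complex, RCLike.im_to_complex] at hre2 him2
    apply Complex.ext
    · simpa using hre2.symm
    · simpa using him2.symm
  rw [heq]
  exact (Complex.continuous_ofReal.comp hre).add
    ((Complex.continuous_ofReal.comp him).mul continuous_const)

end AuxChi

end AuxChi

/-- For a channel with finite-dimensional input/output, the output χ-quantity
`μ ↦ χ(Φ(μ))` is continuous in the topology of weak convergence. -/
theorem continuous_output_chi
    (dA dB dE : ℕ) (hdA : 0 < dA) (hdB : 0 < dB) (hdE : 0 < dE)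
    (V : Matrix (Fin dB × Fin dE) (Fin dA) ℂ) (hV : Vᴴ * V = 1) :
    Continuous (fun μ : ProbabilityMeasure (stateSet dA) => gChiOut (chanPhi V) μ) := by
  classical
  have hg : ContinuousOn (fun ρ : Matrix (Fin dA) (Fin dA) ℂ => vnEntropy (chanPhi V ρ))
      (stateSet dA) :=
    (AuxChi.continuousOn_vnEntropy dB).comp (AuxChi.continuous_chanPhi V).continuousOn
      (fun ρ hρ => AuxChi.chanPhi_mem V hV hρ)
  have hterm1 : Continuous fun μ : ProbabilityMeasure (stateSet dA) =>
      vnEntropy (chanPhi V (barycenter μ)) :=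
    hg.comp_continuous AuxChi.continuous_barycenter fun μ => AuxChi.barycenter_mem μ
  have hfc : Continuous fun ρ : stateSet dA => vnEntropy (chanPhi V ρ.1) :=
    hg.comp_continuous continuous_subtype_val fun ρ => ρ.2
  have hterm2 : Continuous fun μ : ProbabilityMeasure (stateSet dA) =>
      ∫ ρ : stateSet dA, vnEntropy (chanPhi V ρ.1) ∂(μ : Measure (stateSet dA)) := by
    have h := MeasureTheory.ProbabilityMeasure.continuous_integral_boundedContinuousFunction
      (X := stateSet dA) (BoundedContinuousFunction.mkOfCompact ⟨_, hfc⟩)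
    simpa using h
  exact hterm1.sub hterm2
end
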